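/- arXiv:1312.2201 — 6 statements merged into one kernel-verified Lean document; each statement's English description precedes it below -/
import Mathlib

section
/- Let Q be a nonnegative finite irreducible transition kernel on the nonnegative integers (Q(i,ℤ₊) ∈ (0,∞) for all i, and for all i,j there exists n with Qⁿ(i,j) > 0). Let P(i,j) = Q(i,j)/Q(i,ℤ₊) be the associated stochastic kernel with Markov chain (Xₙ), and define f(i) = E_i ∏_{n=0}^∞ Q(Xₙ, ℤ₊), assuming E_i ∏_{n=0}^∞ max(Q(Xₙ,ℤ₊),1) < ∞ for all i. If f(i) > 0 for some i ∈ ℤ₊, then f(j) > 0 for every j ∈ ℤ₊. -/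
open MeasureTheory Filter Topology
open scoped ENNReal NNReal

structure MC where
  μ : ℕ → Measure (ℕ → ℕ)
  prob : ∀ i, IsProbabilityMeasure (μ i)
  start : ∀ i, μ i {ω | ω 0 = i} = 1
  P : ℕ → ℕ → ℝ≥0∞
  P_sum : ∀ i, ∑' j, P i j = 1
  markov : ∀ i, (μ i).map (fun ω n => ω (n + 1)) = Measure.sum fun j => P i j • μ j

noncomputable def qt (Q : ℕ → ℕ → ℝ≥0∞) (i : ℕ) : ℝ≥0∞ := ∑' j, Q i j

noncomputable def fQ (Q : ℕ → ℕ → ℝ≥0∞) (X : MC) (i : ℕ) : ℝ≥0∞ :=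
  ∫⁻ ω, ∏' n, qt Q (ω n) ∂(X.μ i)

def condC (Q : ℕ → ℕ → ℝ≥0∞) (X : MC) : Prop :=
  ∀ i, (∫⁻ ω, ∏' n, max (qt Q (ω n)) 1 ∂(X.μ i)) < ∞

noncomputable def Qpow (Q : ℕ → ℕ → ℝ≥0∞) : ℕ → ℕ → ℕ → ℝ≥0∞
  | 0 => fun i j => if i = j then 1 else 0
  | n + 1 => fun i j => ∑' k, Q i k * Qpow Q n k j

def Irred (Q : ℕ → ℕ → ℝ≥0∞) : Prop := ∀ i j, ∃ n, 0 < Qpow Q n i j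

noncomputable def locTime (j : ℕ) (ω : ℕ → ℕ) : ℝ≥0∞ := ∑' n, if ω n = j then 1 else 0

noncomputable def locExp (γ : ℝ) (j : ℕ) (ω : ℕ → ℕ) : ℝ≥0∞ :=
  ∏' n, if ω n = j then ENNReal.ofReal (Real.exp γ) else 1

noncomputable def deltaQ (Q : ℕ → ℕ → ℝ≥0∞) (j : ℕ) : ℝ := Real.log (qt Q j).toReal

noncomputable def jumpP (X : MC) (i : ℕ) (j : ℤ) : ℝ≥0∞ :=
  if 0 ≤ (i : ℤ) + j then X.P i ((i : ℤ) + j).toNat else 0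

/-! ### Auxiliary lemmas on infinite products in `ℝ≥0∞` -/

lemma hasProd_of_one_le (c : ℕ → ℝ≥0∞) (hc : ∀ n, 1 ≤ c n) :
    HasProd c (⨆ F : Finset ℕ, ∏ n ∈ F, c n) :=
  tendsto_atTop_iSup fun _ _ hFG =>
    Finset.prod_le_prod_of_subset_of_one_le' hFG fun i _ _ => hc i

lemma hasProd_of_le_one (b : ℕ → ℝ≥0∞) (hb : ∀ n, b n ≤ 1) :
    HasProd b (⨅ F : Finset ℕ, ∏ n ∈ F, b n) := by
  apply tendsto_atTop_iInf
  intro F G hFG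
  calc ∏ n ∈ G, b n = (∏ n ∈ G \ F, b n) * ∏ n ∈ F, b n := (Finset.prod_sdiff hFG).symm
    _ ≤ 1 * ∏ n ∈ F, b n := by
        gcongr
        exact Finset.prod_le_one' fun i _ => hb i
    _ = ∏ n ∈ F, b n := one_mul _

lemma multipliable_of_max (a : ℕ → ℝ≥0∞) (hfin : (∏' n, max (a n) 1) ≠ ∞) :
    Multipliable a := by
  have hc := hasProd_of_one_le (fun n => max (a n) 1) fun n => le_max_right _ _
  have hb := hasProd_of_le_one (fun n => min (a n) 1) fun n => min_le_right _ _
  have hC : (⨆ F : Finset ℕ, ∏ n ∈ F, max (a n) 1) ≠ ∞ := by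
    rwa [← hc.tprod_eq]
  have hC0 : (⨆ F : Finset ℕ, ∏ n ∈ F, max (a n) 1) ≠ 0 := by
    intro h
    have h1 : (1 : ℝ≥0∞) ≤ 0 := by
      calc (1 : ℝ≥0∞) = ∏ n ∈ (∅ : Finset ℕ), max (a n) 1 := by simp
        _ ≤ ⨆ F : Finset ℕ, ∏ n ∈ F, max (a n) 1 :=
            le_iSup (fun F : Finset ℕ => ∏ n ∈ F, max (a n) 1) ∅
        _ = 0 := h
    simp at h1
  have := ENNReal.Tendsto.mul hb (Or.inr hC) hc (Or.inl hC0)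
  exact ⟨_, by simp only [← Finset.prod_mul_distrib, min_mul_max, mul_one] at this; exact this⟩

/-! ### Finite-horizon quantities -/

noncomputable def gN (Q : ℕ → ℕ → ℝ≥0∞) (N : ℕ) (ω : ℕ → ℕ) : ℝ≥0∞ :=
  ∏ n ∈ Finset.range N, qt Q (ω n)

noncomputable def fN (Q : ℕ → ℕ → ℝ≥0∞) (X : MC) (N i : ℕ) : ℝ≥0∞ :=
  ∫⁻ ω, gN Q N ω ∂(X.μ i)

lemma gN_meas (Q : ℕ → ℕ → ℝ≥0∞) (N : ℕ) : Measurable (gN Q N) :=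
  Finset.measurable_prod _ fun n _ => (measurable_from_top : Measurable (qt Q)).comp (measurable_pi_apply n)

lemma shift_meas : Measurable (fun ω : ℕ → ℕ => fun n => ω (n + 1)) :=
  measurable_pi_lambda _ fun n => measurable_pi_apply (n + 1)

lemma h_meas (Q : ℕ → ℕ → ℝ≥0∞) :
    Measurable (fun ω : ℕ → ℕ => ∏' n, max (qt Q (ω n)) 1) := by
  have heq : (fun ω : ℕ → ℕ => ∏' n, max (qt Q (ω n)) 1)
      = fun ω => ⨆ F : Finset ℕ, ∏ n ∈ F, max (qt Q (ω n)) 1 := by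
    funext ω
    exact (hasProd_of_one_le _ fun n => le_max_right _ _).tprod_eq
  rw [heq]
  exact Measurable.iSup fun F => Finset.measurable_prod _ fun n _ =>
    ((measurable_from_top : Measurable (qt Q)).comp (measurable_pi_apply n)).max measurable_const

lemma ae_start (X : MC) (i : ℕ) : ∀ᵐ ω ∂(X.μ i), ω 0 = i := by
  have hm : MeasurableSet {ω : ℕ → ℕ | ω 0 = i} := by
    exact measurable_pi_apply (X := fun _ : ℕ => ℕ) 0 (measurableSet_singleton i)
  haveI := X.prob i
  rw [ae_iff]
  have hs : {ω : ℕ → ℕ | ¬ ω 0 = i} = {ω : ℕ → ℕ | ω 0 = i}ᶜ := rfl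
  rw [hs, measure_compl hm (measure_ne_top _ _), X.start i, measure_univ]
  simp

lemma fN_rec (Q : ℕ → ℕ → ℝ≥0∞) (X : MC)
    (hpos : ∀ i, 0 < qt Q i) (hfin : ∀ i, qt Q i < ∞)
    (hP : ∀ i j, X.P i j = Q i j / qt Q i) (N i : ℕ) :
    fN Q X (N + 1) i = ∑' j, Q i j * fN Q X N j := by
  have h1 : ∀ᵐ ω ∂(X.μ i), gN Q (N + 1) ω = qt Q i * gN Q N (fun n => ω (n + 1)) := by
    filter_upwards [ae_start X i] with ω h0
    simp only [gN, Finset.prod_range_succ']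
    rw [h0, mul_comm]
  calc fN Q X (N + 1) i
      = ∫⁻ ω, qt Q i * gN Q N (fun n => ω (n + 1)) ∂(X.μ i) := lintegral_congr_ae h1
    _ = qt Q i * ∫⁻ ω, gN Q N (fun n => ω (n + 1)) ∂(X.μ i) :=
        lintegral_const_mul _ ((gN_meas Q N).comp shift_meas)
    _ = qt Q i * ∫⁻ ω, gN Q N ω ∂((X.μ i).map (fun ω n => ω (n + 1))) := by
        rw [lintegral_map (gN_meas Q N) shift_meas]
    _ = qt Q i * ∑' j, X.P i j * fN Q X N j := by
        rw [X.markov i, lintegral_sum_measure]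
        congr 1
        exact tsum_congr fun j => lintegral_smul_measure _ _
    _ = ∑' j, Q i j * fN Q X N j := by
        rw [← ENNReal.tsum_mul_left]
        exact tsum_congr fun j => by
          rw [← mul_assoc, hP i j, ENNReal.mul_div_cancel (hpos i).ne' (hfin i).ne]

lemma fN_tendsto (Q : ℕ → ℕ → ℝ≥0∞) (X : MC) (hC : condC Q X) (i : ℕ) :
    Tendsto (fun N => fN Q X N i) atTop (𝓝 (fQ Q X i)) := by
  refine tendsto_lintegral_of_dominated_convergence
    (fun ω => ∏' n, max (qt Q (ω n)) 1) (fun N => gN_meas Q N) ?_ (hC i).ne ?_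
  · intro N
    filter_upwards with ω
    calc gN Q N ω ≤ ∏ n ∈ Finset.range N, max (qt Q (ω n)) 1 :=
        Finset.prod_le_prod' fun n _ => le_max_left _ _
      _ ≤ ⨆ F : Finset ℕ, ∏ n ∈ F, max (qt Q (ω n)) 1 :=
        le_iSup (fun F : Finset ℕ => ∏ n ∈ F, max (qt Q (ω n)) 1) _
      _ = ∏' n, max (qt Q (ω n)) 1 :=
        (hasProd_of_one_le _ fun n => le_max_right _ _).tprod_eq.symm
  · filter_upwards [ae_lt_top (h_meas Q) (hC i).ne] with ω hω
    exact (multipliable_of_max _ hω.ne).hasProd.tendsto_prod_nat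

lemma fQ_step (Q : ℕ → ℕ → ℝ≥0∞) (X : MC)
    (hpos : ∀ i, 0 < qt Q i) (hfin : ∀ i, qt Q i < ∞)
    (hP : ∀ i j, X.P i j = Q i j / qt Q i) (hC : condC Q X) (i j : ℕ) :
    Q i j * fQ Q X j ≤ fQ Q X i := by
  have hQfin : Q i j ≠ ∞ := ne_top_of_le_ne_top (hfin i).ne (ENNReal.le_tsum j)
  have h1 : Tendsto (fun N => fN Q X (N + 1) i) atTop (𝓝 (fQ Q X i)) :=
    (fN_tendsto Q X hC i).comp (tendsto_add_atTop_nat 1)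
  have h2 : Tendsto (fun N => Q i j * fN Q X N j) atTop (𝓝 (Q i j * fQ Q X j)) := by
    rcases eq_or_ne (fQ Q X j) 0 with h0 | h0
    · rcases eq_or_ne (Q i j) 0 with hq | hq
      · simp only [hq, zero_mul]
        exact tendsto_const_nhds
      · exact ENNReal.Tendsto.const_mul (fN_tendsto Q X hC j) (Or.inr hQfin)
    · exact ENNReal.Tendsto.const_mul (fN_tendsto Q X hC j) (Or.inl h0)
  refine le_of_tendsto_of_tendsto' h2 h1 fun N => ?_
  rw [fN_rec Q X hpos hfin hP N i]
  exact ENNReal.le_tsum j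

lemma fQ_chain (Q : ℕ → ℕ → ℝ≥0∞) (X : MC)
    (hpos : ∀ i, 0 < qt Q i) (hfin : ∀ i, qt Q i < ∞)
    (hP : ∀ i j, X.P i j = Q i j / qt Q i) (hC : condC Q X) :
    ∀ n i j, 0 < Qpow Q n i j → 0 < fQ Q X j → 0 < fQ Q X i := by
  intro n
  induction n with
  | zero =>
      intro i j hp hf
      by_cases hij : i = j
      · rwa [hij]
      · simp [Qpow, hij] at hp
  | succ n ih =>
      intro i j hp hf
      have : ∃ k, Q i k * Qpow Q n k j ≠ 0 := by
        by_contra hall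
        push_neg at hall
        have : (∑' k, Q i k * Qpow Q n k j) = 0 := by
          simp [ENNReal.tsum_eq_zero, hall]
        exact hp.ne' (by simpa [Qpow] using this)
      obtain ⟨k, hk⟩ := this
      have hQik : Q i k ≠ 0 := fun h => hk (by simp [h])
      have hQp : Qpow Q n k j ≠ 0 := fun h => hk (by simp [h])
      have hfk : 0 < fQ Q X k := ih k j (pos_iff_ne_zero.mpr hQp) hf
      calc (0 : ℝ≥0∞) < Q i k * fQ Q X k := ENNReal.mul_pos hQik hfk.ne'
        _ ≤ fQ Q X i := fQ_step Q X hpos hfin hP hC i k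

theorem stmt0 (Q : ℕ → ℕ → ℝ≥0∞) (X : MC)
    (hpos : ∀ i, 0 < qt Q i) (hfin : ∀ i, qt Q i < ∞)
    (hirr : Irred Q)
    (hP : ∀ i j, X.P i j = Q i j / qt Q i)
    (hC : condC Q X)
    (i₀ : ℕ) (h : 0 < fQ Q X i₀) :
    ∀ j, 0 < fQ Q X j := by
  intro j
  obtain ⟨n, hn⟩ := hirr j i₀
  exact fQ_chain Q X hpos hfin hP hC n j i₀ hn h
end

section
/- Under condition (ℂ): E_i ∏_{n=0}^∞ max(Q(Xₙ,ℤ₊),1) < ∞ for every state i, the function f(i) := E_i ∏_{n=0}^∞ Q(Xₙ,ℤ₊) is harmonic for the kernel Q, i.e., ∑_{j=0}^∞ Q(i,j) f(j) = f(i) for every i ∈ ℤ₊. -/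
open MeasureTheory Filter Topology
open scoped ENNReal NNReal

noncomputable def pmax (a : ℕ → ℝ≥0∞) : ℝ≥0∞ := ⨆ s : Finset ℕ, ∏ k ∈ s, max (a k) 1
noncomputable def pmin (a : ℕ → ℝ≥0∞) : ℝ≥0∞ := ⨅ s : Finset ℕ, ∏ k ∈ s, min (a k) 1

lemma hasProd_pmax (a : ℕ → ℝ≥0∞) : HasProd (fun k => max (a k) 1) (pmax a) :=
  tendsto_atTop_iSup fun s t hst =>
    Finset.prod_le_prod_of_subset_of_one_le' hst fun k _ _ => le_max_right _ _

lemma one_le_pmax (a : ℕ → ℝ≥0∞) : 1 ≤ pmax a :=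
  le_trans (by simp) (le_iSup (fun s : Finset ℕ => ∏ k ∈ s, max (a k) 1) ∅)

lemma hasProd_pmin (a : ℕ → ℝ≥0∞) : HasProd (fun k => min (a k) 1) (pmin a) := by
  refine tendsto_atTop_iInf fun s t hst => ?_
  rw [← Finset.prod_sdiff hst]
  exact mul_le_of_le_one_left zero_le
    (Finset.prod_le_one (fun k _ => zero_le) (fun k _ => min_le_right _ _))

lemma hasProd_of_pmax_ne_top {a : ℕ → ℝ≥0∞} (h : pmax a ≠ ⊤) :
    HasProd a (pmax a * pmin a) := by
  have key : ∀ s : Finset ℕ, ∏ k ∈ s, a k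
      = (∏ k ∈ s, max (a k) 1) * ∏ k ∈ s, min (a k) 1 := by
    intro s
    rw [← Finset.prod_mul_distrib]
    refine Finset.prod_congr rfl fun k _ => ?_
    rcases le_total (a k) 1 with hk | hk <;> simp [max_eq_right, max_eq_left, min_eq_left,
      min_eq_right, hk]
  have hB0 : pmax a ≠ 0 := by
    intro h0
    simpa [h0] using one_le_pmax a
  have := ENNReal.Tendsto.mul (hasProd_pmax a) (Or.inl hB0) (hasProd_pmin a) (Or.inr h)
  exact (this.congr fun s => (key s).symm)

lemma tprod_of_pmax_ne_top {a : ℕ → ℝ≥0∞} (h : pmax a ≠ ⊤) :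
    ∏' n, a n = pmax a * pmin a := (hasProd_of_pmax_ne_top h).tprod_eq

lemma hasProd_shift {c : ℝ≥0∞} (hct : c ≠ ⊤) {f : ℕ → ℝ≥0∞} {p : ℝ≥0∞}
    (h : HasProd (fun n => f (n + 1)) p) (hf0 : f 0 = c) : HasProd f (c * p) := by
  classical
  have hinj : Function.Injective Nat.succ := Nat.succ_injective
  set u : Finset ℕ → Finset ℕ := fun s => s.preimage Nat.succ hinj.injOn with hu
  have hmemu : ∀ (s : Finset ℕ) (x : ℕ), x ∈ u s ↔ x + 1 ∈ s := by
    intro s x; simp [hu, Finset.mem_preimage, Nat.succ_eq_add_one]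
  have key : ∀ s : Finset ℕ, 0 ∈ s → ∏ x ∈ s, f x = c * ∏ y ∈ u s, f (y + 1) := by
    intro s hs
    have himg : (u s).image Nat.succ = s.erase 0 := by
      ext n
      cases n with
      | zero => simp
      | succ m => simp [Finset.mem_image, hmemu, Nat.succ_eq_add_one]
    have h2 : ∏ y ∈ u s, f (y + 1) = ∏ x ∈ s.erase 0, f x := by
      rw [← himg, Finset.prod_image (fun x _ y _ hxy => hinj hxy)]
    rw [h2, ← hf0, ← Finset.prod_insert (Finset.notMem_erase 0 s), Finset.insert_erase hs]
  have hu_mono : Monotone u := by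
    intro s t hst x hx
    rw [hmemu] at hx ⊢; exact hst hx
  have hu_tendsto : Tendsto u atTop atTop :=
    tendsto_atTop_finset_of_monotone hu_mono fun x => ⟨{x + 1}, by simp [hmemu]⟩
  have h1 : Tendsto (fun s => c * ∏ y ∈ u s, f (y + 1)) atTop (𝓝 (c * p)) :=
    ENNReal.Tendsto.const_mul (h.comp hu_tendsto) (Or.inr hct)
  refine h1.congr' ?_
  filter_upwards [eventually_ge_atTop {0}] with s hs
  exact (key s (by simpa using hs)).symm

theorem stmt1 (Q : ℕ → ℕ → ℝ≥0∞) (X : MC)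
    (hpos : ∀ i, 0 < qt Q i) (hfin : ∀ i, qt Q i < ∞)
    (hP : ∀ i j, X.P i j = Q i j / qt Q i)
    (hC : condC Q X) :
    ∀ i, ∑' j, Q i j * fQ Q X j = fQ Q X i := by
  classical
  -- measurability of coordinate factors
  have hcoord : ∀ (g : ℕ → ℝ≥0∞) (k : ℕ), Measurable (fun ω : ℕ → ℕ => g (ω k)) :=
    fun g k => measurable_from_top.comp (measurable_pi_apply k)
  -- the measurable versions of the products
  set B : (ℕ → ℕ) → ℝ≥0∞ := fun ω => pmax (fun n => qt Q (ω n)) with hBdef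
  set G : (ℕ → ℕ) → ℝ≥0∞ := fun ω =>
    pmax (fun n => qt Q (ω n)) * pmin (fun n => qt Q (ω n)) with hGdef
  have hBm : Measurable B := by
    refine Measurable.iSup fun s => ?_
    exact Finset.measurable_prod s fun k _ => hcoord (fun j => max (qt Q j) 1) k
  have hGm : Measurable G := by
    refine Measurable.mul ?_ ?_
    · exact Measurable.iSup fun s =>
        Finset.measurable_prod s fun k _ => hcoord (fun j => max (qt Q j) 1) k
    · exact Measurable.iInf fun s =>
        Finset.measurable_prod s fun k _ => hcoord (fun j => min (qt Q j) 1) k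
  -- shift map
  set σ : (ℕ → ℕ) → (ℕ → ℕ) := fun ω n => ω (n + 1) with hσdef
  have hσm : Measurable σ := measurable_pi_lambda _ fun n => measurable_pi_apply (n + 1)
  -- a.e. finiteness of B
  have haeB : ∀ j, ∀ᵐ ω ∂X.μ j, B ω ≠ ⊤ := by
    intro j
    have h1 : ∫⁻ ω, B ω ∂X.μ j ≠ ⊤ := by
      have h2 : ∀ ω : ℕ → ℕ, (∏' n, max (qt Q (ω n)) 1) = B ω := fun ω =>
        (hasProd_pmax (fun n => qt Q (ω n))).tprod_eq
      have := (hC j).ne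
      rw [show (fun ω : ℕ → ℕ => ∏' n, max (qt Q (ω n)) 1) = B from funext h2] at this
      exact this
    exact (ae_lt_top hBm h1).mono fun ω hω => hω.ne
  -- B of shifted sequence is at most B
  have hBshift : ∀ ω : ℕ → ℕ, B (σ ω) ≤ B ω := by
    intro ω
    refine iSup_le fun t => ?_
    have : ∏ k ∈ t, max (qt Q (ω (k + 1))) 1
        = ∏ x ∈ t.image Nat.succ, max (qt Q (ω x)) 1 := by
      rw [Finset.prod_image (fun x _ y _ hxy => Nat.succ_injective hxy)]
    rw [this]
    exact le_iSup (fun s : Finset ℕ => ∏ k ∈ s, max (qt Q (ω k)) 1) (t.image Nat.succ)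
  -- fQ equals the integral of the measurable surrogate G
  have hfQ : ∀ j, fQ Q X j = ∫⁻ ω, G ω ∂X.μ j := by
    intro j
    refine lintegral_congr_ae ((haeB j).mono fun ω hω => ?_)
    exact tprod_of_pmax_ne_top hω
  intro i
  -- a.e. decomposition of the full product
  have hstart : ∀ᵐ ω ∂X.μ i, ω 0 = i := by
    have hms : MeasurableSet {ω : ℕ → ℕ | ω 0 = i} := by
      have := (measurable_pi_apply (X := fun _ : ℕ => ℕ) 0) (measurableSet_singleton i)
      simpa [Set.preimage] using this
    haveI := X.prob i
    have := measure_compl (μ := X.μ i) hms (measure_ne_top (X.μ i) _)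
    rw [X.start i, measure_univ] at this
    simpa [ae_iff] using by
      have : X.μ i {ω : ℕ → ℕ | ω 0 = i}ᶜ = 0 := by simpa using this
      simpa [Set.compl_setOf] using this
  have hkey : ∀ᵐ ω ∂X.μ i, (∏' n, qt Q (ω n)) = qt Q i * G (σ ω) := by
    filter_upwards [hstart, haeB i] with ω h0 hB
    have hBσ : pmax (fun n => qt Q (ω (n + 1))) ≠ ⊤ :=
      fun h => hB (top_le_iff.mp (h ▸ hBshift ω))
    have h1 : HasProd (fun n => qt Q (ω (n + 1))) (G (σ ω)) :=
      hasProd_of_pmax_ne_top hBσ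
    have h2 : HasProd (fun n => qt Q (ω n)) (qt Q (ω 0) * G (σ ω)) :=
      hasProd_shift (hfin (ω 0)).ne h1 rfl
    rw [h2.tprod_eq, h0]
  -- main computation
  have hmain : fQ Q X i = qt Q i * ∑' j, X.P i j * fQ Q X j := by
    calc fQ Q X i = ∫⁻ ω, qt Q i * G (σ ω) ∂X.μ i := lintegral_congr_ae hkey
    _ = qt Q i * ∫⁻ ω, G (σ ω) ∂X.μ i := lintegral_const_mul _ (hGm.comp hσm)
    _ = qt Q i * ∫⁻ ω, G ω ∂(X.μ i).map σ := by rw [lintegral_map hGm hσm]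
    _ = qt Q i * ∫⁻ ω, G ω ∂(Measure.sum fun j => X.P i j • X.μ j) := by
        rw [X.markov i]
    _ = qt Q i * ∑' j, X.P i j * ∫⁻ ω, G ω ∂X.μ j := by
        rw [lintegral_sum_measure]
        congr 1
        exact tsum_congr fun j => lintegral_smul_measure _ _
    _ = qt Q i * ∑' j, X.P i j * fQ Q X j := by
        congr 1
        exact tsum_congr fun j => by rw [hfQ j]
  rw [hmain, ← ENNReal.tsum_mul_left]
  refine tsum_congr fun j => ?_
  rw [hP i j, ← mul_assoc, mul_comm (qt Q i), ENNReal.div_mul_cancel (hpos i).ne' (hfin i).ne]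
end

section
/- For the simple random walk on ℤ₊ reflected at 0 with p > 1/2 and α < p/q, the function f(i) = E_i α^{ℓ(0)} satisfies f(i) = 1 − (q/p)^i + (q/p)^i f(0) for every i ≥ 1, where f(0) = α(1−q/p)/(1−αq/p); in particular f(i) → 1 as i → ∞. -/
open MeasureTheory Filter Topology
open scoped ENNReal NNReal

noncomputable def gg (α : ℝ) (j : ℕ) : ℝ≥0∞ := if j = 0 then ENNReal.ofReal α else 1

noncomputable def fI (X : MC) (α : ℝ) (N i : ℕ) : ℝ≥0∞ :=
  ∫⁻ ω, ∏ n ∈ Finset.range N, gg α (ω n) ∂(X.μ i)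

lemma meas_prodN (α : ℝ) (N : ℕ) :
    Measurable fun ω : ℕ → ℕ => ∏ n ∈ Finset.range N, gg α (ω n) :=
  Finset.measurable_prod _ fun n _ => (measurable_from_top : Measurable (gg α)).comp (measurable_pi_apply n)

lemma fI_zero (X : MC) (α : ℝ) (i : ℕ) : fI X α 0 i = 1 := by
  haveI := X.prob i
  simp [fI, lintegral_one, measure_univ]

lemma fI_succ (X : MC) (α : ℝ) (N i : ℕ) :
    fI X α (N + 1) i = gg α i * ∑' j, X.P i j * fI X α N j := by
  haveI := X.prob i
  have hmeas := meas_prodN α N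
  have hshift : Measurable fun (ω : ℕ → ℕ) (n : ℕ) => ω (n + 1) :=
    measurable_pi_lambda _ fun n => measurable_pi_apply (n + 1)
  have hae : ∀ᵐ ω ∂X.μ i, ω 0 = i := by
    have hm : MeasurableSet {ω : ℕ → ℕ | ω 0 = i} := by
      have he : {ω : ℕ → ℕ | ω 0 = i} = (fun ω : ℕ → ℕ => ω 0) ⁻¹' {i} := rfl
      rw [he]; exact measurable_pi_apply 0 (measurableSet_singleton i)
    have hc : X.μ i {ω : ℕ → ℕ | ω 0 = i}ᶜ = 0 := by
      rw [measure_compl hm (measure_ne_top _ _), X.start i, measure_univ, tsub_self]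
    exact hc
  calc fI X α (N + 1) i
      = ∫⁻ ω, gg α (ω 0) * ∏ n ∈ Finset.range N, gg α (ω (n + 1)) ∂(X.μ i) := by
        unfold fI
        refine lintegral_congr fun ω => ?_
        rw [Finset.prod_range_succ', mul_comm]
    _ = ∫⁻ ω, gg α i * ∏ n ∈ Finset.range N, gg α (ω (n + 1)) ∂(X.μ i) :=
        lintegral_congr_ae (hae.mono fun ω h => by dsimp only; rw [h])
    _ = gg α i * ∫⁻ ω, ∏ n ∈ Finset.range N, gg α ((fun n => ω (n + 1)) n) ∂(X.μ i) :=
        lintegral_const_mul _ (hmeas.comp hshift)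
    _ = gg α i * ∫⁻ ω, ∏ n ∈ Finset.range N, gg α (ω n) ∂((X.μ i).map fun ω n => ω (n + 1)) := by
        rw [lintegral_map hmeas hshift]
    _ = gg α i * ∑' j, X.P i j * fI X α N j := by
        rw [X.markov i, lintegral_sum_measure]
        congr 1
        exact tsum_congr fun j => by rw [lintegral_smul_measure]; rfl

lemma P_zero_of_one (X : MC) (i a : ℕ) (h : X.P i a = 1) :
    ∀ k, k ≠ a → X.P i k = 0 := by
  intro k hka
  have hle : X.P i k + X.P i a ≤ ∑' j, X.P i j := by
    have hsub := ENNReal.sum_le_tsum (f := X.P i) ({k, a} : Finset ℕ)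
    rwa [Finset.sum_pair hka] at hsub
  rw [h, X.P_sum i] at hle
  have h2 : X.P i k + 1 ≤ 0 + 1 := by simpa using hle
  have h3 : X.P i k ≤ 0 := (ENNReal.add_le_add_iff_right ENNReal.one_ne_top).mp h2
  exact le_antisymm h3 zero_le

lemma P_zero_of_two (X : MC) (i a b : ℕ) (hab : a ≠ b)
    (h : X.P i a + X.P i b = 1) : ∀ k, k ≠ a → k ≠ b → X.P i k = 0 := by
  intro k hka hkb
  have hle : X.P i k + (X.P i a + X.P i b) ≤ ∑' j, X.P i j := by
    have hsub := ENNReal.sum_le_tsum (f := X.P i) ({k, a, b} : Finset ℕ)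
    rwa [Finset.sum_insert (by simp [hka, hkb]), Finset.sum_pair hab] at hsub
  rw [h, X.P_sum i] at hle
  have h2 : X.P i k + 1 ≤ 0 + 1 := by simpa using hle
  have h3 : X.P i k ≤ 0 := (ENNReal.add_le_add_iff_right ENNReal.one_ne_top).mp h2
  exact le_antisymm h3 zero_le

lemma tsum_P_zero (X : MC) (h0 : X.P 0 1 = 1) (x : ℕ → ℝ≥0∞) :
    ∑' j, X.P 0 j * x j = x 1 := by
  rw [tsum_eq_sum (s := ({1} : Finset ℕ)) (fun b hb => by
    rw [P_zero_of_one X 0 1 h0 b (by simpa using hb), zero_mul])]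
  simp [h0]

lemma tsum_P_pos (X : MC) (p q : ℝ) (hp0 : 0 ≤ p) (hq0 : 0 ≤ q) (hpq : p + q = 1)
    (k : ℕ)
    (hup : X.P (k + 1) (k + 2) = ENNReal.ofReal p)
    (hdn : X.P (k + 1) k = ENNReal.ofReal q)
    (x : ℕ → ℝ≥0∞) :
    ∑' j, X.P (k + 1) j * x j = ENNReal.ofReal p * x (k + 2) + ENNReal.ofReal q * x k := by
  have hsum : X.P (k + 1) (k + 2) + X.P (k + 1) k = 1 := by
    rw [hup, hdn, ← ENNReal.ofReal_add hp0 hq0, hpq, ENNReal.ofReal_one]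
  have hz := P_zero_of_two X (k + 1) (k + 2) k (by omega) hsum
  rw [tsum_eq_sum (s := ({k + 2, k} : Finset ℕ)) (fun b hb => by
    simp only [Finset.mem_insert, Finset.mem_singleton, not_or] at hb
    rw [hz b hb.1 hb.2, zero_mul])]
  rw [Finset.sum_pair (by omega : k + 2 ≠ k), hup, hdn]
lemma tprod_eq_iInf (h : ℕ → ℝ≥0∞) (hh : ∀ n, h n ≤ 1) :
    ∏' n, h n = ⨅ N, ∏ n ∈ Finset.range N, h n := by
  have hanti : Antitone fun s : Finset ℕ => ∏ n ∈ s, h n := by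
    intro s t hst
    calc ∏ n ∈ t, h n = (∏ n ∈ t \ s, h n) * ∏ n ∈ s, h n := (Finset.prod_sdiff hst).symm
      _ ≤ 1 * ∏ n ∈ s, h n := mul_le_mul_left (Finset.prod_le_one' fun n _ => hh n) _
      _ = ∏ n ∈ s, h n := one_mul _
  have h1 : HasProd h (⨅ s : Finset ℕ, ∏ n ∈ s, h n) := tendsto_atTop_iInf hanti
  rw [h1.tprod_eq]
  refine le_antisymm (le_iInf fun N => iInf_le _ (Finset.range N)) (le_iInf fun s => ?_)
  obtain ⟨N, hN⟩ := s.exists_nat_subset_range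
  exact le_trans (iInf_le _ N) (hanti hN)

lemma tprod_eq_iSup (h : ℕ → ℝ≥0∞) (hh : ∀ n, 1 ≤ h n) :
    ∏' n, h n = ⨆ N, ∏ n ∈ Finset.range N, h n := by
  have hmono : Monotone fun s : Finset ℕ => ∏ n ∈ s, h n := fun s t hst =>
    Finset.prod_le_prod_of_subset_of_one_le' hst fun n _ _ => hh n
  have h1 : HasProd h (⨆ s : Finset ℕ, ∏ n ∈ s, h n) := tendsto_atTop_iSup hmono
  rw [h1.tprod_eq]
  refine le_antisymm (iSup_le fun s => ?_) (iSup_le fun N => le_iSup (fun s : Finset ℕ => ∏ n ∈ s, h n) (Finset.range N))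
  obtain ⟨N, hN⟩ := s.exists_nat_subset_range
  exact le_trans (hmono hN) (le_iSup (fun N => ∏ n ∈ Finset.range N, h n) N)
lemma real_pin (p q α : ℝ) (hp0 : 0 < p) (hq0 : 0 < q) (hpq : p + q = 1)
    (hα : 0 < α) (hr1 : q / p < 1) (hαr : α * (q / p) < 1)
    (v : ℕ → ℝ)
    (hv0 : v 0 = α * v 1)
    (hvrec : ∀ k, v (k + 1) = p * v (k + 2) + q * v k)
    (hlb : ∀ i, min 1 (1 - (q/p)^i + (q/p)^i * (α * (1 - q/p) / (1 - α * (q/p)))) ≤ v i)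
    (hub : ∀ i, v i ≤ max 1 (1 - (q/p)^i + (q/p)^i * (α * (1 - q/p) / (1 - α * (q/p))))) :
    ∀ i, v i = 1 - (q/p)^i + (q/p)^i * (α * (1 - q/p) / (1 - α * (q/p))) := by
  set r : ℝ := q / p with hr
  set c0 : ℝ := α * (1 - r) / (1 - α * r) with hc0
  have hrpos : 0 < r := div_pos hq0 hp0
  have hαr' : 0 < 1 - α * r := by linarith
  have hqrp : q = r * p := by rw [hr]; field_simp
  have key : c0 * (1 - α * r) = α * (1 - r) := by rw [hc0]; field_simp
  have hc0pos : 0 < c0 := by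
    apply div_pos _ hαr'
    have : 0 < 1 - r := by linarith
    positivity
  clear_value r c0
  clear hr hc0
  set c : ℕ → ℝ := fun i => 1 - r ^ i + r ^ i * c0 with hc
  have hc1pos : 0 < c 1 := by
    have h1 : c 1 = 1 - r + r * c0 := by simp [hc, pow_one]
    rw [h1]; nlinarith
  have hc0c1 : α * c 1 = c 0 := by
    have h1 : c 1 = 1 - r + r * c0 := by simp [hc, pow_one]
    have h2 : c 0 = c0 := by simp [hc]
    rw [h1, h2]
    linear_combination (-1 : ℝ) * key
  have hr2 : p * r ^ 2 + q = r := by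
    linear_combination (1 - r) * hqrp + r * hpq
  have hcrec : ∀ k, c (k + 1) = p * c (k + 2) + q * c k := by
    intro k
    simp only [hc]
    linear_combination (-1 : ℝ) * hpq + ((1 - c0) * r ^ k) * hr2
  -- the ratio
  set s : ℝ := v 0 / c 0 with hs
  have hc0ne : c 0 ≠ 0 := by simp [hc]; exact hc0pos.ne'
  have hbase0 : v 0 = s * c 0 := by rw [hs]; field_simp
  have hbase1 : v 1 = s * c 1 := by
    have h1 : α * v 1 = α * (s * c 1) := by
      rw [← hv0, hbase0, ← hc0c1]; ring
    exact mul_left_cancel₀ hα.ne' h1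
  have hmain : ∀ k, v k = s * c k ∧ v (k + 1) = s * c (k + 1) := by
    intro k
    induction k with
    | zero => exact ⟨hbase0, hbase1⟩
    | succ k ih =>
      refine ⟨ih.2, ?_⟩
      have h1 : p * v (k + 2) = p * (s * c (k + 2)) := by
        have hv := hvrec k
        have hcc := hcrec k
        rw [ih.1, ih.2] at hv
        linear_combination (-1 : ℝ) * hv + s * hcc
      exact mul_left_cancel₀ hp0.ne' h1
  -- squeeze: s = 1
  have hpow : Tendsto (fun i : ℕ => r ^ i) atTop (𝓝 0) := by
    apply tendsto_pow_atTop_nhds_zero_of_lt_one hrpos.le hr1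
  have hctend : Tendsto c atTop (𝓝 1) := by
    have : Tendsto (fun i : ℕ => 1 - r ^ i + r ^ i * c0) atTop (𝓝 (1 - 0 + 0 * c0)) :=
      (tendsto_const_nhds.sub hpow).add (hpow.mul_const c0)
    simpa using this
  have hvtend : Tendsto v atTop (𝓝 s) := by
    have h1 : Tendsto (fun i => s * c i) atTop (𝓝 (s * 1)) := hctend.const_mul s
    have h2 : (fun i => s * c i) = v := by
      funext i; exact (hmain i).1.symm
    rw [h2, mul_one] at h1
    exact h1
  have hminT : Tendsto (fun i => min 1 (c i)) atTop (𝓝 (min 1 1)) :=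
    tendsto_const_nhds.min hctend
  have hmaxT : Tendsto (fun i => max 1 (c i)) atTop (𝓝 (max 1 1)) :=
    tendsto_const_nhds.max hctend
  have hs1 : 1 ≤ s := by
    have := le_of_tendsto_of_tendsto' hminT hvtend fun i => hlb i
    simpa using this
  have hs2 : s ≤ 1 := by
    have := le_of_tendsto_of_tendsto' hvtend hmaxT fun i => hub i
    simpa using this
  have hseq : s = 1 := le_antisymm hs2 hs1
  intro i
  have := (hmain i).1
  rw [hseq, one_mul] at this
  exact this
noncomputable def CC (p q α : ℝ) (i : ℕ) : ℝ :=
  1 - (q/p)^i + (q/p)^i * (α * (1 - q/p) / (1 - α * (q/p)))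

lemma CC_facts (p q α : ℝ) (hp0 : 0 < p) (hq0 : 0 < q) (hpq : p + q = 1)
    (hα : 0 < α) (hr1 : q / p < 1) (hαr : α * (q / p) < 1) :
    α * CC p q α 1 = CC p q α 0 ∧
    (∀ k, p * CC p q α (k + 2) + q * CC p q α k = CC p q α (k + 1)) ∧
    (∀ i, 0 ≤ CC p q α i) ∧
    (α ≤ 1 → ∀ i, CC p q α i ≤ 1) ∧
    (1 ≤ α → ∀ i, 1 ≤ CC p q α i) := by
  unfold CC
  set r : ℝ := q / p with hr
  set c0 : ℝ := α * (1 - r) / (1 - α * r) with hc0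
  have hrpos : 0 < r := div_pos hq0 hp0
  have hαr' : 0 < 1 - α * r := by linarith
  have hqrp : q = r * p := by rw [hr]; field_simp
  have key : c0 * (1 - α * r) = α * (1 - r) := by rw [hc0]; field_simp
  have hc0pos : 0 < c0 := by
    apply div_pos _ hαr'
    have : 0 < 1 - r := by linarith
    positivity
  clear_value r c0
  clear hr hc0
  have hr2 : p * r ^ 2 + q = r := by
    linear_combination (1 - r) * hqrp + r * hpq
  refine ⟨?_, ?_, ?_, ?_, ?_⟩
  · simp only [pow_one, pow_zero]
    linear_combination (-1 : ℝ) * key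
  · intro k
    linear_combination hpq + ((c0 - 1) * r ^ k) * hr2
  · intro i
    have h1 : (0:ℝ) ≤ r ^ i := by positivity
    have h2 : r ^ i ≤ 1 := pow_le_one₀ hrpos.le hr1.le
    nlinarith
  · intro hle i
    have h1 : (0:ℝ) ≤ r ^ i := by positivity
    have h2 : r ^ i ≤ 1 := pow_le_one₀ hrpos.le hr1.le
    have hc0le : c0 ≤ 1 := by nlinarith
    nlinarith
  · intro hge i
    have h1 : (0:ℝ) ≤ r ^ i := by positivity
    have hc0ge : 1 ≤ c0 := by nlinarith
    nlinarith

lemma ennreal_pin (p q α : ℝ) (hp0 : 0 < p) (hq0 : 0 < q) (hpq : p + q = 1)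
    (hα : 0 < α) (hr1 : q / p < 1) (hαr : α * (q / p) < 1)
    (u : ℕ → ℝ≥0∞) (hfin : ∀ i, u i ≠ ∞)
    (hu0 : u 0 = ENNReal.ofReal α * u 1)
    (hurec : ∀ k, u (k + 1) = ENNReal.ofReal p * u (k + 2) + ENNReal.ofReal q * u k)
    (hlbv : ∀ i, ENNReal.ofReal (min 1 (CC p q α i)) ≤ u i)
    (hubv : ∀ i, u i ≤ ENNReal.ofReal (max 1 (CC p q α i))) :
    ∀ i, u i = ENNReal.ofReal (CC p q α i) := by
  set v : ℕ → ℝ := fun i => (u i).toReal with hv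
  have hv0 : v 0 = α * v 1 := by
    rw [hv]
    simp only [hu0, ENNReal.toReal_mul, ENNReal.toReal_ofReal hα.le]
  have hvrec : ∀ k, v (k + 1) = p * v (k + 2) + q * v k := by
    intro k
    rw [hv]
    simp only [hurec k]
    rw [ENNReal.toReal_add (ENNReal.mul_ne_top ENNReal.ofReal_ne_top (hfin _))
      (ENNReal.mul_ne_top ENNReal.ofReal_ne_top (hfin _)),
      ENNReal.toReal_mul, ENNReal.toReal_mul,
      ENNReal.toReal_ofReal hp0.le, ENNReal.toReal_ofReal hq0.le]
  have hlb : ∀ i, min 1 (CC p q α i) ≤ v i := fun i =>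
    (ENNReal.ofReal_le_iff_le_toReal (hfin i)).mp (hlbv i)
  have hub : ∀ i, v i ≤ max 1 (CC p q α i) := by
    intro i
    have h1 := ENNReal.toReal_mono ENNReal.ofReal_ne_top (hubv i)
    rwa [ENNReal.toReal_ofReal (le_trans zero_le_one (le_max_left _ _))] at h1
  have hpin := real_pin p q α hp0 hq0 hpq hα hr1 hαr v hv0 hvrec hlb hub
  intro i
  rw [← ENNReal.ofReal_toReal (hfin i)]
  exact congrArg ENNReal.ofReal (hpin i)

lemma ofReal_comb (p q a b : ℝ) (hp : 0 ≤ p) (hq : 0 ≤ q) (ha : 0 ≤ a) (hb : 0 ≤ b) :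
    ENNReal.ofReal p * ENNReal.ofReal a + ENNReal.ofReal q * ENNReal.ofReal b
      = ENNReal.ofReal (p * a + q * b) := by
  rw [← ENNReal.ofReal_mul hp, ← ENNReal.ofReal_mul hq,
    ← ENNReal.ofReal_add (by positivity) (by positivity)]
lemma main (X : MC) (p q α : ℝ) (hp : 1/2 < p) (hp1 : p ≤ 1) (hq : q = 1 - p)
    (hα : 0 < α) (hαlt : α < p / q)
    (h0 : X.P 0 1 = 1)
    (hup : ∀ i : ℕ, 1 ≤ i → X.P i (i + 1) = ENNReal.ofReal p)
    (hdn : ∀ i : ℕ, 1 ≤ i → X.P i (i - 1) = ENNReal.ofReal q) :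
    ∀ i, (∫⁻ ω, ∏' n, (if ω n = 0 then ENNReal.ofReal α else 1) ∂(X.μ i))
      = ENNReal.ofReal (CC p q α i) := by
  have hp0 : 0 < p := by linarith
  have hq0 : 0 < q := by
    rcases eq_or_lt_of_le (show (0:ℝ) ≤ q by rw [hq]; linarith) with h | h
    · exfalso
      rw [← h, div_zero] at hαlt
      linarith
    · exact h
  have hpq : p + q = 1 := by rw [hq]; ring
  have hr1 : q / p < 1 := (div_lt_one hp0).mpr (by linarith)
  have hαq : α * q < p := (lt_div_iff₀ hq0).mp hαlt
  have hαr : α * (q / p) < 1 := by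
    rw [mul_div_assoc'] at *
    exact (div_lt_one hp0).mpr hαq
  obtain ⟨hCC0, hCCrec, hCCpos, hCCle, hCCge⟩ := CC_facts p q α hp0 hq0 hpq hα hr1 hαr
  have hfI0 : ∀ N, fI X α (N + 1) 0 = ENNReal.ofReal α * fI X α N 1 := by
    intro N
    rw [fI_succ, tsum_P_zero X h0]
    simp [gg]
  have hfIs : ∀ N k, fI X α (N + 1) (k + 1)
      = ENNReal.ofReal p * fI X α N (k + 2) + ENNReal.ofReal q * fI X α N k := by
    intro N k
    have hupk : X.P (k + 1) (k + 2) = ENNReal.ofReal p := by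
      simpa using hup (k + 1) (by omega)
    have hdnk : X.P (k + 1) k = ENNReal.ofReal q := by
      simpa using hdn (k + 1) (by omega)
    rw [fI_succ, tsum_P_pos X p q hp0.le hq0.le hpq k hupk hdnk]
    simp [gg]
  rcases le_or_gt α 1 with hle | hgt
  · -- α ≤ 1
    have hg1 : ∀ j, gg α j ≤ 1 := by
      intro j
      unfold gg
      split
      · exact ENNReal.ofReal_le_one.mpr hle
      · exact le_rfl
    have hanti : Antitone (fun (N : ℕ) (ω : ℕ → ℕ) => ∏ n ∈ Finset.range N, gg α (ω n)) := by
      apply antitone_nat_of_succ_le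
      intro N ω
      dsimp only
      rw [Finset.prod_range_succ]
      calc (∏ n ∈ Finset.range N, gg α (ω n)) * gg α (ω N)
          ≤ (∏ n ∈ Finset.range N, gg α (ω n)) * 1 := mul_le_mul_right (hg1 _) _
        _ = _ := mul_one _
    have hIeq : ∀ i, (∫⁻ ω, ∏' n, (if ω n = 0 then ENNReal.ofReal α else 1) ∂(X.μ i))
        = ⨅ N, fI X α N i := by
      intro i
      have h1 : (∫⁻ ω, ∏' n, (if ω n = 0 then ENNReal.ofReal α else 1) ∂(X.μ i))
          = ∫⁻ ω, ⨅ N, ∏ n ∈ Finset.range N, gg α (ω n) ∂(X.μ i) := by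
        refine lintegral_congr fun ω => ?_
        have := tprod_eq_iInf (fun n => gg α (ω n)) (fun n => hg1 (ω n))
        simpa [gg] using this
      rw [h1, lintegral_iInf (fun N => meas_prodN α N) hanti ?_]
      · rfl
      · show fI X α 0 i ≠ ⊤
        rw [fI_zero]
        exact ENNReal.one_ne_top
    set u : ℕ → ℝ≥0∞ := fun i => ⨅ N, fI X α N i with hu
    have hanti_i : ∀ i, Antitone (fun N => fI X α N i) :=
      fun i Na Nb h => lintegral_mono fun ω => hanti h ω
    have htend : ∀ i, Tendsto (fun N => fI X α N i) atTop (𝓝 (u i)) :=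
      fun i => tendsto_atTop_iInf (hanti_i i)
    have hub1 : ∀ N i, fI X α N i ≤ 1 := by
      intro N i
      haveI := X.prob i
      calc fI X α N i ≤ ∫⁻ _, 1 ∂(X.μ i) :=
            lintegral_mono fun ω => Finset.prod_le_one' fun n _ => hg1 _
        _ = 1 := by simp [lintegral_one, measure_univ]
    have hfinu : ∀ i, u i ≠ ∞ :=
      fun i => ne_top_of_le_ne_top ENNReal.one_ne_top ((iInf_le _ 0).trans (hub1 0 i))
    have hlbN : ∀ N i, ENNReal.ofReal (CC p q α i) ≤ fI X α N i := by
      intro N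
      induction N with
      | zero =>
        intro i
        rw [fI_zero]
        exact ENNReal.ofReal_le_one.mpr (hCCle hle i)
      | succ N ih =>
        intro i
        cases i with
        | zero =>
          rw [hfI0]
          calc ENNReal.ofReal (CC p q α 0)
              = ENNReal.ofReal α * ENNReal.ofReal (CC p q α 1) := by
                rw [← ENNReal.ofReal_mul hα.le, hCC0]
            _ ≤ ENNReal.ofReal α * fI X α N 1 := mul_le_mul_right (ih 1) _
        | succ k =>
          rw [hfIs]
          calc ENNReal.ofReal (CC p q α (k + 1))
              = ENNReal.ofReal p * ENNReal.ofReal (CC p q α (k + 2))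
                + ENNReal.ofReal q * ENNReal.ofReal (CC p q α k) := by
                rw [ofReal_comb p q _ _ hp0.le hq0.le (hCCpos _) (hCCpos _), hCCrec k]
            _ ≤ _ := add_le_add (mul_le_mul_right (ih _) _) (mul_le_mul_right (ih _) _)
    have hu0 : u 0 = ENNReal.ofReal α * u 1 := by
      have l1 : Tendsto (fun N => fI X α (N + 1) 0) atTop (𝓝 (u 0)) :=
        (htend 0).comp (tendsto_add_atTop_nat 1)
      have l2 : Tendsto (fun N => fI X α (N + 1) 0) atTop (𝓝 (ENNReal.ofReal α * u 1)) := by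
        simp only [hfI0]
        exact ENNReal.Tendsto.const_mul (htend 1) (Or.inr ENNReal.ofReal_ne_top)
      exact tendsto_nhds_unique l1 l2
    have hurec : ∀ k, u (k + 1) = ENNReal.ofReal p * u (k + 2) + ENNReal.ofReal q * u k := by
      intro k
      have l1 : Tendsto (fun N => fI X α (N + 1) (k + 1)) atTop (𝓝 (u (k + 1))) :=
        (htend (k + 1)).comp (tendsto_add_atTop_nat 1)
      have l2 : Tendsto (fun N => fI X α (N + 1) (k + 1)) atTop
          (𝓝 (ENNReal.ofReal p * u (k + 2) + ENNReal.ofReal q * u k)) := by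
        simp only [hfIs]
        exact Tendsto.add
          (ENNReal.Tendsto.const_mul (htend (k + 2)) (Or.inr ENNReal.ofReal_ne_top))
          (ENNReal.Tendsto.const_mul (htend k) (Or.inr ENNReal.ofReal_ne_top))
      exact tendsto_nhds_unique l1 l2
    have hlbu : ∀ i, ENNReal.ofReal (min 1 (CC p q α i)) ≤ u i :=
      fun i => le_iInf fun N =>
        le_trans (ENNReal.ofReal_le_ofReal (min_le_right _ _)) (hlbN N i)
    have hubu : ∀ i, u i ≤ ENNReal.ofReal (max 1 (CC p q α i)) := by
      intro i
      calc u i ≤ fI X α 0 i := iInf_le _ 0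
        _ ≤ 1 := hub1 0 i
        _ = ENNReal.ofReal 1 := ENNReal.ofReal_one.symm
        _ ≤ _ := ENNReal.ofReal_le_ofReal (le_max_left _ _)
    have hpin := ennreal_pin p q α hp0 hq0 hpq hα hr1 hαr u hfinu hu0 hurec hlbu hubu
    intro i
    rw [hIeq i]
    exact hpin i
  · -- 1 < α
    have hg1 : ∀ j, 1 ≤ gg α j := by
      intro j
      unfold gg
      split
      · exact ENNReal.one_le_ofReal.mpr hgt.le
      · exact le_rfl
    have hmono : Monotone (fun (N : ℕ) (ω : ℕ → ℕ) => ∏ n ∈ Finset.range N, gg α (ω n)) := by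
      apply monotone_nat_of_le_succ
      intro N ω
      dsimp only
      rw [Finset.prod_range_succ]
      calc (∏ n ∈ Finset.range N, gg α (ω n))
          = (∏ n ∈ Finset.range N, gg α (ω n)) * 1 := (mul_one _).symm
        _ ≤ (∏ n ∈ Finset.range N, gg α (ω n)) * gg α (ω N) := mul_le_mul_right (hg1 _) _
    have hIeq : ∀ i, (∫⁻ ω, ∏' n, (if ω n = 0 then ENNReal.ofReal α else 1) ∂(X.μ i))
        = ⨆ N, fI X α N i := by
      intro i
      have h1 : (∫⁻ ω, ∏' n, (if ω n = 0 then ENNReal.ofReal α else 1) ∂(X.μ i))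
          = ∫⁻ ω, ⨆ N, ∏ n ∈ Finset.range N, gg α (ω n) ∂(X.μ i) := by
        refine lintegral_congr fun ω => ?_
        have := tprod_eq_iSup (fun n => gg α (ω n)) (fun n => hg1 (ω n))
        simpa [gg] using this
      rw [h1, lintegral_iSup (fun N => meas_prodN α N) hmono]
      rfl
    set u : ℕ → ℝ≥0∞ := fun i => ⨆ N, fI X α N i with hu
    have hmono_i : ∀ i, Monotone (fun N => fI X α N i) :=
      fun i Na Nb h => lintegral_mono fun ω => hmono h ω
    have htend : ∀ i, Tendsto (fun N => fI X α N i) atTop (𝓝 (u i)) :=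
      fun i => tendsto_atTop_iSup (hmono_i i)
    have hubN : ∀ N i, fI X α N i ≤ ENNReal.ofReal (CC p q α i) := by
      intro N
      induction N with
      | zero =>
        intro i
        rw [fI_zero]
        exact ENNReal.one_le_ofReal.mpr (hCCge hgt.le i)
      | succ N ih =>
        intro i
        cases i with
        | zero =>
          rw [hfI0]
          calc ENNReal.ofReal α * fI X α N 1
              ≤ ENNReal.ofReal α * ENNReal.ofReal (CC p q α 1) := mul_le_mul_right (ih 1) _
            _ = ENNReal.ofReal (CC p q α 0) := by
                rw [← ENNReal.ofReal_mul hα.le, hCC0]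
        | succ k =>
          rw [hfIs]
          calc ENNReal.ofReal p * fI X α N (k + 2) + ENNReal.ofReal q * fI X α N k
              ≤ ENNReal.ofReal p * ENNReal.ofReal (CC p q α (k + 2))
                + ENNReal.ofReal q * ENNReal.ofReal (CC p q α k) :=
                add_le_add (mul_le_mul_right (ih _) _) (mul_le_mul_right (ih _) _)
            _ = ENNReal.ofReal (CC p q α (k + 1)) := by
                rw [ofReal_comb p q _ _ hp0.le hq0.le (hCCpos _) (hCCpos _), hCCrec k]
    have hlb1 : ∀ N i, 1 ≤ fI X α N i := by
      intro N i
      haveI := X.prob i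
      calc (1 : ℝ≥0∞) = ∫⁻ _, 1 ∂(X.μ i) := by simp [lintegral_one, measure_univ]
        _ ≤ fI X α N i := lintegral_mono fun ω => Finset.one_le_prod' fun n _ => hg1 _
    have hfinu : ∀ i, u i ≠ ∞ :=
      fun i => ne_top_of_le_ne_top ENNReal.ofReal_ne_top (iSup_le fun N => hubN N i)
    have hu0 : u 0 = ENNReal.ofReal α * u 1 := by
      have l1 : Tendsto (fun N => fI X α (N + 1) 0) atTop (𝓝 (u 0)) :=
        (htend 0).comp (tendsto_add_atTop_nat 1)
      have l2 : Tendsto (fun N => fI X α (N + 1) 0) atTop (𝓝 (ENNReal.ofReal α * u 1)) := by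
        simp only [hfI0]
        exact ENNReal.Tendsto.const_mul (htend 1) (Or.inr ENNReal.ofReal_ne_top)
      exact tendsto_nhds_unique l1 l2
    have hurec : ∀ k, u (k + 1) = ENNReal.ofReal p * u (k + 2) + ENNReal.ofReal q * u k := by
      intro k
      have l1 : Tendsto (fun N => fI X α (N + 1) (k + 1)) atTop (𝓝 (u (k + 1))) :=
        (htend (k + 1)).comp (tendsto_add_atTop_nat 1)
      have l2 : Tendsto (fun N => fI X α (N + 1) (k + 1)) atTop
          (𝓝 (ENNReal.ofReal p * u (k + 2) + ENNReal.ofReal q * u k)) := by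
        simp only [hfIs]
        exact Tendsto.add
          (ENNReal.Tendsto.const_mul (htend (k + 2)) (Or.inr ENNReal.ofReal_ne_top))
          (ENNReal.Tendsto.const_mul (htend k) (Or.inr ENNReal.ofReal_ne_top))
      exact tendsto_nhds_unique l1 l2
    have hlbu : ∀ i, ENNReal.ofReal (min 1 (CC p q α i)) ≤ u i := by
      intro i
      calc ENNReal.ofReal (min 1 (CC p q α i)) ≤ ENNReal.ofReal 1 :=
            ENNReal.ofReal_le_ofReal (min_le_left _ _)
        _ = 1 := ENNReal.ofReal_one
        _ ≤ fI X α 0 i := hlb1 0 i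
        _ ≤ u i := le_iSup (fun N => fI X α N i) 0
    have hubu : ∀ i, u i ≤ ENNReal.ofReal (max 1 (CC p q α i)) :=
      fun i => iSup_le fun N =>
        le_trans (hubN N i) (ENNReal.ofReal_le_ofReal (le_max_right _ _))
    have hpin := ennreal_pin p q α hp0 hq0 hpq hα hr1 hαr u hfinu hu0 hurec hlbu hubu
    intro i
    rw [hIeq i]
    exact hpin i

theorem stmt7 (X : MC) (p q α : ℝ) (hp : 1/2 < p) (hp1 : p ≤ 1) (hq : q = 1 - p)
    (hα : 0 < α) (hαlt : α < p / q)
    (h0 : X.P 0 1 = 1)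
    (hup : ∀ i : ℕ, 1 ≤ i → X.P i (i + 1) = ENNReal.ofReal p)
    (hdn : ∀ i : ℕ, 1 ≤ i → X.P i (i - 1) = ENNReal.ofReal q)
    (f : ℕ → ℝ≥0∞)
    (hf : ∀ i, f i = ∫⁻ ω, ∏' n, (if ω n = 0 then ENNReal.ofReal α else 1) ∂(X.μ i)) :
    f 0 = ENNReal.ofReal (α * (1 - q / p) / (1 - α * q / p)) ∧
    (∀ i : ℕ, 1 ≤ i →
      f i = ENNReal.ofReal (1 - (q / p) ^ i) + ENNReal.ofReal ((q / p) ^ i) * f 0) ∧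
    Tendsto f atTop (𝓝 1) := by
  have hp0 : 0 < p := by linarith
  have hq0 : 0 < q := by
    rcases eq_or_lt_of_le (show (0:ℝ) ≤ q by rw [hq]; linarith) with h | h
    · exfalso
      rw [← h, div_zero] at hαlt
      linarith
    · exact h
  have hr1 : q / p < 1 := (div_lt_one hp0).mpr (by linarith)
  have hαq : α * q < p := (lt_div_iff₀ hq0).mp hαlt
  have hαr : 0 < 1 - α * (q / p) := by
    have : α * (q / p) < 1 := by
      rw [mul_div_assoc'] at *
      exact (div_lt_one hp0).mpr hαq
    linarith
  have hc0nonneg : 0 ≤ α * (1 - q / p) / (1 - α * (q / p)) := by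
    apply div_nonneg _ hαr.le
    have : 0 ≤ 1 - q / p := by linarith
    positivity
  have hc0nonneg' : 0 ≤ α * (1 - q / p) / (1 - α * q / p) := by
    have he : α * q / p = α * (q / p) := mul_div_assoc α q p
    rw [he]
    exact hc0nonneg
  have hpownn : ∀ i : ℕ, (0:ℝ) ≤ (q/p)^i := fun i => by positivity
  have hpowle : ∀ i : ℕ, (q/p)^i ≤ 1 :=
    fun i => pow_le_one₀ (div_nonneg hq0.le hp0.le) hr1.le
  have hmain := main X p q α hp hp1 hq hα hαlt h0 hup hdn
  have hfC : ∀ i, f i = ENNReal.ofReal (CC p q α i) := fun i => by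
    rw [hf i]; exact hmain i
  have hCCalt : ∀ i, CC p q α i
      = 1 - (q/p)^i + (q/p)^i * (α * (1 - q/p) / (1 - α * q / p)) := by
    intro i
    simp [CC, mul_div_assoc]
  have hf0 : f 0 = ENNReal.ofReal (α * (1 - q / p) / (1 - α * q / p)) := by
    rw [hfC 0, hCCalt 0]
    norm_num
  refine ⟨hf0, fun i _ => ?_, ?_⟩
  · rw [hfC i, hf0, hCCalt i]
    rw [← ENNReal.ofReal_mul (hpownn i),
      ← ENNReal.ofReal_add (by linarith [hpowle i]) (mul_nonneg (hpownn i) hc0nonneg')]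
  · have hpow : Tendsto (fun i : ℕ => (q/p)^i) atTop (𝓝 0) :=
      tendsto_pow_atTop_nhds_zero_of_lt_one (div_nonneg hq0.le hp0.le) hr1
    have hCCtend : Tendsto (fun i => CC p q α i) atTop (𝓝 1) := by
      have h1 := (tendsto_const_nhds (x := (1:ℝ)).sub hpow).add
        (hpow.mul_const (α * (1 - q/p) / (1 - α * (q/p))))
      simpa [CC] using h1
    have h2 := ENNReal.tendsto_ofReal hCCtend
    rw [ENNReal.ofReal_one] at h2
    have hfe : f = fun i => ENNReal.ofReal (CC p q α i) := funext hfC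
    rw [hfe]
    exact h2
end

section
/- Let (Xₙ) be a Markov chain on ℤ₊. Assume: (a) for every i ∈ ℤ₊ there is a positive decreasing function g_i on ℤ₊ such that (g_i(Xₙ)) is a supermartingale under P_i-dynamics, with p₁ := sup_{i≥1} g_i(i)/g_i(i−1) < 1; (b) p₂ := inf_{i≥0} P_i{X₁ ≥ i+1} > 0. Then inf_{i≥1} P_i{inf_{n≥1} Xₙ ≥ i+1} ≥ (1−p₁)p₂ > 0, and hence sup_{i∈ℤ₊} E_i e^{γℓ(i)} < ∞ for every γ < log(1/(1−(1−p₁)p₂)). -/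
open MeasureTheory Filter Topology
open scoped ENNReal NNReal

namespace S11

def shf (ω : ℕ → ℕ) : ℕ → ℕ := fun n => ω (n + 1)

lemma meas_shf : Measurable shf := measurable_pi_lambda _ fun n => measurable_pi_apply _

lemma meas_coord (m : ℕ) (s : Set ℕ) : MeasurableSet {ω : ℕ → ℕ | ω m ∈ s} :=
  measurableSet_preimage (measurable_pi_apply m) MeasurableSet.of_discrete

lemma mu_start_compl (X : MC) (j : ℕ) : X.μ j {ω | ω 0 = j}ᶜ = 0 := by
  have := X.prob j
  have h := measure_compl (μ := X.μ j) (meas_coord 0 {j}) (measure_ne_top _ _)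
  have h2 : {ω : ℕ → ℕ | ω 0 ∈ ({j} : Set ℕ)} = {ω | ω 0 = j} := rfl
  rw [h2] at h
  rw [h, X.start j, measure_univ, tsub_self]

lemma mu_null (X : MC) (j : ℕ) {S : Set (ℕ → ℕ)} (h : ∀ ω ∈ S, ω 0 ≠ j) :
    X.μ j S = 0 := by
  refine measure_mono_null ?_ (mu_start_compl X j)
  intro ω hω
  exact h ω hω

lemma event_congr (X : MC) (j : ℕ) {S T : Set (ℕ → ℕ)}
    (h : ∀ ω, ω 0 = j → (ω ∈ S ↔ ω ∈ T)) : X.μ j S = X.μ j T := by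
  have key : ∀ U : Set (ℕ → ℕ), X.μ j U = X.μ j (U ∩ {ω | ω 0 = j}) := by
    intro U
    refine le_antisymm ?_ (measure_mono Set.inter_subset_left)
    calc X.μ j U ≤ X.μ j (U ∩ {ω | ω 0 = j}) + X.μ j (U \ {ω | ω 0 = j}) :=
          measure_le_inter_add_diff _ _ _
    _ ≤ X.μ j (U ∩ {ω | ω 0 = j}) + 0 := by
          gcongr
          refine le_of_eq (measure_mono_null ?_ (mu_start_compl X j))
          exact fun ω hω => hω.2
    _ = X.μ j (U ∩ {ω | ω 0 = j}) := add_zero _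
  rw [key S, key T]
  congr 1
  ext ω
  exact ⟨fun ⟨hs, h0⟩ => ⟨(h ω h0).1 hs, h0⟩, fun ⟨ht, h0⟩ => ⟨(h ω h0).2 ht, h0⟩⟩

lemma mu_shf (X : MC) (i : ℕ) {S : Set (ℕ → ℕ)} (hS : MeasurableSet S) :
    X.μ i (shf ⁻¹' S) = ∑' j, X.P i j * X.μ j S := by
  have h1 : (X.μ i).map (fun ω n => ω (n + 1)) S = X.μ i (shf ⁻¹' S) :=
    Measure.map_apply meas_shf hS
  rw [← h1, X.markov i, Measure.sum_apply _ hS]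
  simp [Measure.smul_apply, smul_eq_mul]

lemma mu_ge (X : MC) (j k : ℕ) :
    X.μ j {ω | k ≤ ω 0} = if k ≤ j then 1 else 0 := by
  split_ifs with h
  · have := X.prob j
    refine le_antisymm prob_le_one ?_
    rw [← X.start j]
    exact measure_mono fun ω (hω : ω 0 = j) => by simp [Set.mem_setOf_eq, hω, h]
  · exact mu_null X j fun ω hω h0 => h (h0 ▸ hω)


lemma measD (i n : ℕ) : MeasurableSet {ω : ℕ → ℕ | ∃ m, m < n ∧ ω m ≤ i} := by
  have : {ω : ℕ → ℕ | ∃ m, m < n ∧ ω m ≤ i}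
      = ⋃ m ∈ {m | m < n}, {ω : ℕ → ℕ | ω m ∈ {x | x ≤ i}} := by
    ext ω; simp
  rw [this]
  exact MeasurableSet.biUnion (Set.to_countable _) fun m _ => meas_coord m _

lemma measHitLow (i : ℕ) : MeasurableSet {ω : ℕ → ℕ | ∃ m, ω m ≤ i} := by
  have : {ω : ℕ → ℕ | ∃ m, ω m ≤ i} = ⋃ m, {ω : ℕ → ℕ | ω m ∈ {x | x ≤ i}} := by
    ext ω; simp
  rw [this]
  exact MeasurableSet.iUnion fun m => meas_coord m _

lemma lowbound (X : MC) (G : ℕ → ℝ) (hGpos : ∀ j, 0 < G j) (hGanti : Antitone G)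
    (hsmG : ∀ j, ∑' k, X.P j k * ENNReal.ofReal (G k) ≤ ENNReal.ofReal (G j)) (i : ℕ) :
    ∀ j, X.μ j {ω | ∃ m, ω m ≤ i} ≤
      if j ≤ i then 1 else ENNReal.ofReal (G j / G i) := by
  set h : ℕ → ℝ≥0∞ := fun j => if j ≤ i then 1 else ENNReal.ofReal (G j / G i) with hh
  have hGi0 : ENNReal.ofReal (G i) ≠ 0 := by
    simp [ENNReal.ofReal_eq_zero, not_le, hGpos i]
  have hGitop : ENNReal.ofReal (G i) ≠ ⊤ := ENNReal.ofReal_ne_top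
  have hk_le : ∀ k, h k ≤ ENNReal.ofReal (G k) / ENNReal.ofReal (G i) := by
    intro k
    by_cases hk : k ≤ i
    · simp only [hh, hk, if_true]
      rw [ENNReal.le_div_iff_mul_le (Or.inl hGi0) (Or.inl hGitop), one_mul]
      exact ENNReal.ofReal_le_ofReal (hGanti hk)
    · simp only [hh, hk, if_false]
      rw [ENNReal.ofReal_div_of_pos (hGpos i)]
  have hstep : ∀ j, i < j → ∑' k, X.P j k * h k ≤ h j := by
    intro j hj
    calc ∑' k, X.P j k * h k
        ≤ ∑' k, X.P j k * (ENNReal.ofReal (G k) / ENNReal.ofReal (G i)) :=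
          ENNReal.tsum_le_tsum fun k => mul_le_mul' le_rfl (hk_le k)
      _ = (∑' k, X.P j k * ENNReal.ofReal (G k)) / ENNReal.ofReal (G i) := by
          simp only [div_eq_mul_inv, ← mul_assoc]
          rw [ENNReal.tsum_mul_right]
      _ ≤ ENNReal.ofReal (G j) / ENNReal.ofReal (G i) :=
          ENNReal.div_le_div_right (hsmG j) _
      _ = ENNReal.ofReal (G j / G i) := (ENNReal.ofReal_div_of_pos (hGpos i)).symm
      _ = h j := by simp [hh, not_le.mpr hj]
  have claim : ∀ n j, X.μ j {ω | ∃ m, m < n ∧ ω m ≤ i} ≤ h j := by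
    intro n
    induction n with
    | zero =>
      intro j
      have : {ω : ℕ → ℕ | ∃ m, m < 0 ∧ ω m ≤ i} = ∅ := by ext ω; simp
      rw [this, measure_empty]
      exact zero_le
    | succ n ih =>
      intro j
      by_cases hj : j ≤ i
      · have := X.prob j
        simpa [hh, hj] using prob_le_one (μ := X.μ j) (s := _)
      · have hj' : i < j := not_le.1 hj
        have hset : X.μ j {ω | ∃ m, m < n + 1 ∧ ω m ≤ i}
            = X.μ j (shf ⁻¹' {ω | ∃ m, m < n ∧ ω m ≤ i}) := by
          apply event_congr
          intro ω h0
          simp only [Set.mem_setOf_eq, Set.mem_preimage, shf]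
          constructor
          · rintro ⟨m, hm, hle⟩
            cases m with
            | zero => exact absurd (h0 ▸ hle) (not_le.mpr hj')
            | succ m' => exact ⟨m', Nat.lt_of_succ_lt_succ hm, hle⟩
          · rintro ⟨m, hm, hle⟩
            exact ⟨m + 1, Nat.succ_lt_succ hm, hle⟩
        rw [hset, mu_shf X j (measD i n)]
        calc ∑' k, X.P j k * X.μ k {ω | ∃ m, m < n ∧ ω m ≤ i}
            ≤ ∑' k, X.P j k * h k :=
              ENNReal.tsum_le_tsum fun k => mul_le_mul' le_rfl (ih k)
          _ ≤ h j := hstep j hj'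
  intro j
  have hU : {ω : ℕ → ℕ | ∃ m, ω m ≤ i} = ⋃ n, {ω : ℕ → ℕ | ∃ m, m < n ∧ ω m ≤ i} := by
    ext ω
    simp only [Set.mem_setOf_eq, Set.mem_iUnion]
    exact ⟨fun ⟨m, hm⟩ => ⟨m + 1, m, Nat.lt_succ_self m, hm⟩, fun ⟨n, m, _, hm⟩ => ⟨m, hm⟩⟩
  rw [hU, Directed.measure_iUnion ?_]
  · exact iSup_le fun n => claim n j
  · apply Monotone.directed_le
    intro a b hab ω
    rintro ⟨m, hm, hle⟩
    exact ⟨m, lt_of_lt_of_le hm hab, hle⟩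

lemma escape (X : MC) (G : ℕ → ℝ) (p₁ p₂ : ℝ)
    (hGpos : ∀ j, 0 < G j) (hGanti : Antitone G)
    (hsmG : ∀ j, ∑' k, X.P j k * ENNReal.ofReal (G k) ≤ ENNReal.ofReal (G j))
    (i : ℕ) (hp₁i : G (i + 1) / G i ≤ p₁) (hp₁0 : 0 ≤ p₁) (hp₁1 : p₁ ≤ 1)
    (hp₂d : ENNReal.ofReal p₂ ≤ X.μ i {ω | i + 1 ≤ ω 1}) :
    ENNReal.ofReal ((1 - p₁) * p₂) ≤ X.μ i {ω | ∀ n, 1 ≤ n → i + 1 ≤ ω n} := by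
  have hpi := X.prob i
  set A : Set (ℕ → ℕ) := {ω | ∃ m, ω m ≤ i}ᶜ with hA
  have hAm : MeasurableSet A := (measHitLow i).compl
  have hAe : {ω : ℕ → ℕ | ∀ n, 1 ≤ n → i + 1 ≤ ω n} = shf ⁻¹' A := by
    ext ω
    simp only [Set.mem_setOf_eq, Set.mem_preimage, hA, Set.mem_compl_iff, not_exists, not_le,
      shf]
    constructor
    · intro h m
      exact h (m + 1) (Nat.succ_le_succ (Nat.zero_le _))
    · intro h n hn
      cases n with
      | zero => omega
      | succ m => exact h m
  have low : ∀ j, i + 1 ≤ j → 1 - ENNReal.ofReal p₁ ≤ X.μ j A := by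
    intro j hj
    have := X.prob j
    have h1 : X.μ j A = 1 - X.μ j {ω | ∃ m, ω m ≤ i} := by
      rw [hA, measure_compl (measHitLow i) (measure_ne_top _ _), measure_univ]
    have h2 : X.μ j {ω | ∃ m, ω m ≤ i} ≤ ENNReal.ofReal p₁ := by
      have hlb := lowbound X G hGpos hGanti hsmG i j
      rw [if_neg (by omega)] at hlb
      refine hlb.trans (ENNReal.ofReal_le_ofReal ?_)
      refine le_trans ?_ hp₁i
      exact (div_le_div_iff_of_pos_right (hGpos i)).2 (hGanti hj)
    rw [h1]
    exact tsub_le_tsub_left h2 1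
  have hμ1 : X.μ i {ω | i + 1 ≤ ω 1} = ∑' j, (if i + 1 ≤ j then X.P i j else 0) := by
    have he : {ω : ℕ → ℕ | i + 1 ≤ ω 1} = shf ⁻¹' {ω | i + 1 ≤ ω 0} := rfl
    rw [he, mu_shf X i (show MeasurableSet {ω : ℕ → ℕ | i + 1 ≤ ω 0} from
      meas_coord 0 {x | i + 1 ≤ x})]
    apply tsum_congr
    intro j
    rw [mu_ge X j (i + 1)]
    split_ifs <;> simp
  rw [hAe, mu_shf X i hAm]
  calc ENNReal.ofReal ((1 - p₁) * p₂)
      = (1 - ENNReal.ofReal p₁) * ENNReal.ofReal p₂ := by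
        rw [ENNReal.ofReal_mul (by linarith), ENNReal.ofReal_sub _ hp₁0, ENNReal.ofReal_one]
    _ ≤ (1 - ENNReal.ofReal p₁) * ∑' j, (if i + 1 ≤ j then X.P i j else 0) :=
        mul_le_mul' le_rfl (hp₂d.trans hμ1.le)
    _ = ∑' j, (if i + 1 ≤ j then X.P i j else 0) * (1 - ENNReal.ofReal p₁) := by
        rw [← ENNReal.tsum_mul_left]
        exact tsum_congr fun j => mul_comm _ _
    _ ≤ ∑' j, X.P i j * X.μ j A := by
        refine ENNReal.tsum_le_tsum fun j => ?_
        split_ifs with hj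
        · exact mul_le_mul' le_rfl (low j hj)
        · simpa using zero_le _

def Vc (i n : ℕ) (ω : ℕ → ℕ) : ℕ := ∑ m ∈ Finset.range n, if ω m = i then 1 else 0

lemma Vc_succ (i n : ℕ) (ω : ℕ → ℕ) :
    Vc i (n + 1) ω = Vc i n (shf ω) + (if ω 0 = i then 1 else 0) :=
  Finset.sum_range_succ' (fun m => if ω m = i then 1 else 0) n

lemma measVc (i n : ℕ) : Measurable (Vc i n) := by
  apply Finset.measurable_sum
  intro m _
  exact Measurable.ite (show MeasurableSet {ω : ℕ → ℕ | ω m = i} from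
    meas_coord m ({i} : Set ℕ)) measurable_const measurable_const

lemma measVset (i n k : ℕ) : MeasurableSet {ω : ℕ → ℕ | k ≤ Vc i n ω} := by
  have : {ω : ℕ → ℕ | k ≤ Vc i n ω} = Vc i n ⁻¹' {x | k ≤ x} := rfl
  rw [this]
  exact measurableSet_preimage (measVc i n) MeasurableSet.of_discrete

lemma measHit (i : ℕ) : MeasurableSet {ω : ℕ → ℕ | ∃ m, ω m = i} := by
  have : {ω : ℕ → ℕ | ∃ m, ω m = i} = ⋃ m, {ω : ℕ → ℕ | ω m ∈ ({i} : Set ℕ)} := by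
    ext ω; simp
  rw [this]
  exact MeasurableSet.iUnion fun m => meas_coord m _

lemma measEsc (i : ℕ) : MeasurableSet {ω : ℕ → ℕ | ∀ n, 1 ≤ n → i + 1 ≤ ω n} := by
  have : {ω : ℕ → ℕ | ∀ n, 1 ≤ n → i + 1 ≤ ω n}
      = ⋂ m, {ω : ℕ → ℕ | ω (m + 1) ∈ {x | i + 1 ≤ x}} := by
    ext ω
    simp only [Set.mem_setOf_eq, Set.mem_iInter]
    constructor
    · intro h m
      exact h (m + 1) (Nat.succ_le_succ (Nat.zero_le _))
    · intro h n hn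
      cases n with
      | zero => omega
      | succ m => exact h m
  rw [this]
  exact MeasurableSet.iInter fun m => meas_coord (m + 1) _

lemma geom (X : MC) (q : ℝ≥0∞) (i : ℕ)
    (hesc : q ≤ X.μ i {ω | ∀ n, 1 ≤ n → i + 1 ≤ ω n}) :
    ∀ n k j, X.μ j {ω | k + 1 ≤ Vc i n ω}
      ≤ X.μ j {ω | ∃ m, ω m = i} * (1 - q) ^ k := by
  have hpi := X.prob i
  have hret : ∑' j', X.P i j' * X.μ j' {ω | ∃ m, ω m = i} ≤ 1 - q := by
    rw [← mu_shf X i (measHit i)]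
    have hsub : shf ⁻¹' {ω : ℕ → ℕ | ∃ m, ω m = i}
        ⊆ {ω : ℕ → ℕ | ∀ n, 1 ≤ n → i + 1 ≤ ω n}ᶜ := by
      rintro ω ⟨m, hm⟩ hEsc
      have := hEsc (m + 1) (Nat.succ_le_succ (Nat.zero_le _))
      simp only [shf] at hm
      omega
    calc X.μ i (shf ⁻¹' {ω | ∃ m, ω m = i})
        ≤ X.μ i {ω : ℕ → ℕ | ∀ n, 1 ≤ n → i + 1 ≤ ω n}ᶜ := measure_mono hsub
      _ = 1 - X.μ i {ω : ℕ → ℕ | ∀ n, 1 ≤ n → i + 1 ≤ ω n} := by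
          rw [measure_compl (measEsc i) (measure_ne_top _ _), measure_univ]
      _ ≤ 1 - q := tsub_le_tsub_left hesc 1
  have hit1 : X.μ i {ω | ∃ m, ω m = i} = 1 := by
    refine le_antisymm prob_le_one ?_
    rw [← X.start i]
    exact measure_mono fun ω h0 => ⟨0, h0⟩
  intro n
  induction n with
  | zero =>
    intro k j
    have : {ω : ℕ → ℕ | k + 1 ≤ Vc i 0 ω} = ∅ := by
      ext ω; simp [Vc]
    rw [this, measure_empty]
    exact zero_le
  | succ n ih =>
    intro k j
    by_cases hj : j = i
    · rw [hj]
      have hset : X.μ i {ω | k + 1 ≤ Vc i (n + 1) ω}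
          = X.μ i (shf ⁻¹' {ω | k ≤ Vc i n ω}) := by
        apply event_congr
        intro ω h0
        rw [Set.mem_setOf_eq, Set.mem_preimage, Set.mem_setOf_eq, Vc_succ, if_pos h0]
        omega
      rw [hset, mu_shf X i (measVset i n k), hit1, one_mul]
      cases k with
      | zero =>
        calc ∑' j', X.P i j' * X.μ j' {ω | 0 ≤ Vc i n ω}
            ≤ ∑' j', X.P i j' * 1 := by
              refine ENNReal.tsum_le_tsum fun j' => mul_le_mul' le_rfl ?_
              have := X.prob j'
              exact prob_le_one
          _ = 1 := by simp [X.P_sum i]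
          _ = (1 - q) ^ 0 := by rw [pow_zero]
      | succ k' =>
        calc ∑' j', X.P i j' * X.μ j' {ω | k' + 1 ≤ Vc i n ω}
            ≤ ∑' j', X.P i j' * (X.μ j' {ω | ∃ m, ω m = i} * (1 - q) ^ k') :=
              ENNReal.tsum_le_tsum fun j' => mul_le_mul' le_rfl (ih k' j')
          _ = (∑' j', X.P i j' * X.μ j' {ω | ∃ m, ω m = i}) * (1 - q) ^ k' := by
              simp only [← mul_assoc]
              rw [ENNReal.tsum_mul_right]
          _ ≤ (1 - q) * (1 - q) ^ k' := mul_le_mul' hret le_rfl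
          _ = (1 - q) ^ (k' + 1) := by rw [pow_succ, mul_comm]
    · have hset : X.μ j {ω | k + 1 ≤ Vc i (n + 1) ω}
          = X.μ j (shf ⁻¹' {ω | k + 1 ≤ Vc i n ω}) := by
        apply event_congr
        intro ω h0
        have h0i : ω 0 ≠ i := by rw [h0]; exact hj
        rw [Set.mem_setOf_eq, Set.mem_preimage, Set.mem_setOf_eq, Vc_succ, if_neg h0i]
        omega
      rw [hset, mu_shf X j (measVset i n (k + 1))]
      calc ∑' j', X.P j j' * X.μ j' {ω | k + 1 ≤ Vc i n ω}
          ≤ ∑' j', X.P j j' * (X.μ j' {ω | ∃ m, ω m = i} * (1 - q) ^ k) :=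
            ENNReal.tsum_le_tsum fun j' => mul_le_mul' le_rfl (ih k j')
        _ = (∑' j', X.P j j' * X.μ j' {ω | ∃ m, ω m = i}) * (1 - q) ^ k := by
            simp only [← mul_assoc]
            rw [ENNReal.tsum_mul_right]
        _ = X.μ j (shf ⁻¹' {ω | ∃ m, ω m = i}) * (1 - q) ^ k := by
            rw [mu_shf X j (measHit i)]
        _ ≤ X.μ j {ω | ∃ m, ω m = i} * (1 - q) ^ k := by
            refine mul_le_mul' (measure_mono ?_) le_rfl
            rintro ω ⟨m, hm⟩
            exact ⟨m + 1, hm⟩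

lemma tprod_le_one {f : ℕ → ℝ≥0∞} (hf : ∀ n, f n ≤ 1) : ∏' n, f n ≤ 1 := by
  by_cases h : Multipliable f
  · refine le_of_tendsto' h.hasProd fun s => ?_
    calc ∏ n ∈ s, f n ≤ ∏ n ∈ s, 1 := Finset.prod_le_prod' fun n _ => hf n
      _ = 1 := Finset.prod_const_one
  · rw [tprod_eq_one_of_not_multipliable h]

lemma tprod_eq_iSup {f : ℕ → ℝ≥0∞} (hf : ∀ n, 1 ≤ f n) :
    ∏' n, f n = ⨆ k, ∏ n ∈ Finset.range k, f n := by
  have hmono : Monotone fun s : Finset ℕ => ∏ n ∈ s, f n := fun s t hst =>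
    Finset.prod_le_prod_of_subset_of_one_le' hst fun n _ _ => hf n
  have hp : HasProd f (⨆ s : Finset ℕ, ∏ n ∈ s, f n) := tendsto_atTop_iSup hmono
  rw [hp.tprod_eq]
  apply le_antisymm
  · refine iSup_le fun s => ?_
    obtain ⟨k, hk⟩ := s.exists_nat_subset_range
    exact le_iSup_of_le k (hmono hk)
  · exact iSup_le fun k => le_iSup_of_le (Finset.range k) le_rfl

lemma prod_range_eq_pow (c : ℝ≥0∞) (i k : ℕ) (ω : ℕ → ℕ) :
    ∏ n ∈ Finset.range k, (if ω n = i then c else 1) = c ^ Vc i k ω := by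
  induction k with
  | zero => simp [Vc]
  | succ k ih =>
    rw [Finset.prod_range_succ, ih]
    have : Vc i (k + 1) ω = Vc i k ω + (if ω k = i then 1 else 0) :=
      Finset.sum_range_succ _ _
    rw [this, pow_add]
    split_ifs <;> simp

lemma pow_le_one_add_tsum {c : ℝ≥0∞} (hc : 1 ≤ c) (N : ℕ) :
    c ^ N ≤ 1 + ∑' m : ℕ, (if m + 1 ≤ N then c ^ (m + 1) - c ^ m else 0) := by
  have key : ∀ M : ℕ, (1 : ℝ≥0∞) + ∑ m ∈ Finset.range M, (c ^ (m + 1) - c ^ m) = c ^ M := by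
    intro M
    induction M with
    | zero => simp
    | succ M ih =>
      have hle : c ^ M ≤ c ^ (M + 1) := by
        rw [pow_succ]
        exact le_mul_of_one_le_right' hc
      rw [Finset.sum_range_succ, ← add_assoc, ih, add_tsub_cancel_of_le hle]
  calc c ^ N = 1 + ∑ m ∈ Finset.range N, (c ^ (m + 1) - c ^ m) := (key N).symm
    _ ≤ 1 + ∑' m : ℕ, (if m + 1 ≤ N then c ^ (m + 1) - c ^ m else 0) := by
      refine add_le_add le_rfl ?_
      have he : ∑ m ∈ Finset.range N, (c ^ (m + 1) - c ^ m)
          = ∑ m ∈ Finset.range N, (if m + 1 ≤ N then c ^ (m + 1) - c ^ m else 0) :=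
        Finset.sum_congr rfl fun m hm => by
          rw [if_pos (by simpa [Nat.succ_le] using Finset.mem_range.mp hm)]
      rw [he]
      exact ENNReal.sum_le_tsum _

end S11

theorem stmt11 (X : MC) (g : ℕ → ℕ → ℝ) (p₁ p₂ : ℝ)
    (hgpos : ∀ i j, 0 < g i j) (hganti : ∀ i, Antitone (g i))
    (hsmg : ∀ i j, ∑' k, X.P j k * ENNReal.ofReal (g i k) ≤ ENNReal.ofReal (g i j))
    (hp₁ : p₁ < 1) (hp₁d : ∀ i : ℕ, 1 ≤ i → g i i / g i (i - 1) ≤ p₁)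
    (hp₂ : 0 < p₂) (hp₂d : ∀ i, ENNReal.ofReal p₂ ≤ X.μ i {ω | i + 1 ≤ ω 1}) :
    (∀ i : ℕ, 1 ≤ i →
      ENNReal.ofReal ((1 - p₁) * p₂) ≤ X.μ i {ω | ∀ n, 1 ≤ n → i + 1 ≤ ω n}) ∧
    ∀ γ : ℝ, γ < Real.log (1 / (1 - (1 - p₁) * p₂)) →
      (⨆ i, ∫⁻ ω, locExp γ i ω ∂(X.μ i)) < ∞ := by
  have hp₁0 : 0 < p₁ :=
    lt_of_lt_of_le (div_pos (hgpos 1 1) (hgpos 1 0)) (by simpa using hp₁d 1 le_rfl)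
  have hesc : ∀ i : ℕ,
      ENNReal.ofReal ((1 - p₁) * p₂) ≤ X.μ i {ω | ∀ n, 1 ≤ n → i + 1 ≤ ω n} := by
    intro i
    refine S11.escape X (g (i + 1)) p₁ p₂ (hgpos (i + 1)) (hganti (i + 1)) (hsmg (i + 1)) i
      ?_ hp₁0.le hp₁.le (hp₂d i)
    simpa using hp₁d (i + 1) (Nat.succ_le_succ (Nat.zero_le _))
  refine ⟨fun i _ => hesc i, ?_⟩
  intro γ hγ
  have hp₂1 : p₂ ≤ 1 := by
    have h2 : ENNReal.ofReal p₂ ≤ 1 := by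
      refine (hp₂d 0).trans ?_
      have := X.prob 0
      exact prob_le_one
    exact ENNReal.ofReal_le_one.mp h2
  set qR : ℝ := (1 - p₁) * p₂ with hqR
  have hq0R : 0 < qR := mul_pos (by linarith) hp₂
  have hq1R : qR < 1 := by nlinarith
  have h1q : (0 : ℝ) < 1 - qR := by linarith
  have hcr : Real.exp γ * (1 - qR) < 1 := by
    have h2 : Real.exp γ < 1 / (1 - qR) := by
      have h3 := Real.exp_lt_exp.mpr hγ
      rwa [Real.exp_log (by positivity)] at h3
    calc Real.exp γ * (1 - qR) < (1 / (1 - qR)) * (1 - qR) :=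
          mul_lt_mul_of_pos_right h2 h1q
      _ = 1 := by field_simp
  set q : ℝ≥0∞ := ENNReal.ofReal qR with hq
  set c : ℝ≥0∞ := ENNReal.ofReal (Real.exp γ) with hc
  have h1qE : (1 : ℝ≥0∞) - q = ENNReal.ofReal (1 - qR) := by
    rw [hq, ENNReal.ofReal_sub 1 hq0R.le, ENNReal.ofReal_one]
  have hcrE : c * (1 - q) < 1 := by
    rw [h1qE, hc, ← ENNReal.ofReal_mul (Real.exp_nonneg γ)]
    exact ENNReal.ofReal_lt_one.mpr hcr
  set B : ℝ≥0∞ := 1 + (c - 1) * (1 - c * (1 - q))⁻¹ with hB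
  have hBtop : B < ⊤ := by
    rw [hB]
    refine ENNReal.add_lt_top.mpr ⟨ENNReal.one_lt_top, ENNReal.mul_lt_top ?_ ?_⟩
    · exact lt_of_le_of_lt tsub_le_self (hc ▸ ENNReal.ofReal_lt_top)
    · exact ENNReal.inv_lt_top.mpr (tsub_pos_of_lt hcrE)
  refine lt_of_le_of_lt (iSup_le fun i => ?_) hBtop
  have hgeom : ∀ k m : ℕ, X.μ i {ω | m + 1 ≤ S11.Vc i k ω} ≤ (1 - q) ^ m := by
    intro k m
    refine (S11.geom X q i (hesc i) k m i).trans ?_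
    have := X.prob i
    calc X.μ i {ω | ∃ m', ω m' = i} * (1 - q) ^ m
        ≤ 1 * (1 - q) ^ m := mul_le_mul' prob_le_one le_rfl
      _ = (1 - q) ^ m := one_mul _
  by_cases hc1 : 1 ≤ c
  · have perk : ∀ k, ∫⁻ ω, c ^ S11.Vc i k ω ∂(X.μ i) ≤ B := by
      intro k
      have hpi := X.prob i
      calc ∫⁻ ω, c ^ S11.Vc i k ω ∂(X.μ i)
          ≤ ∫⁻ ω, (1 + ∑' m : ℕ,
              (if m + 1 ≤ S11.Vc i k ω then c ^ (m + 1) - c ^ m else 0)) ∂(X.μ i) :=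
            lintegral_mono fun ω => S11.pow_le_one_add_tsum hc1 _
        _ = 1 + ∑' m : ℕ, ∫⁻ ω,
              (if m + 1 ≤ S11.Vc i k ω then c ^ (m + 1) - c ^ m else 0) ∂(X.μ i) := by
            rw [lintegral_add_left measurable_const, lintegral_one, measure_univ,
              lintegral_tsum fun m => (Measurable.ite (S11.measVset i k (m + 1))
                measurable_const measurable_const).aemeasurable]
        _ ≤ 1 + ∑' m : ℕ, (c ^ (m + 1) - c ^ m) * (1 - q) ^ m := by
            refine add_le_add le_rfl (ENNReal.tsum_le_tsum fun m => ?_)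
            have hind : (fun ω => if m + 1 ≤ S11.Vc i k ω then c ^ (m + 1) - c ^ m else 0)
                = Set.indicator {ω | m + 1 ≤ S11.Vc i k ω} fun _ => c ^ (m + 1) - c ^ m := by
              ext ω
              rw [Set.indicator_apply]
              rfl
            calc ∫⁻ ω, (if m + 1 ≤ S11.Vc i k ω then c ^ (m + 1) - c ^ m else 0) ∂(X.μ i)
                = (c ^ (m + 1) - c ^ m) * X.μ i {ω | m + 1 ≤ S11.Vc i k ω} := by
                  rw [show (fun ω => if m + 1 ≤ S11.Vc i k ω then c ^ (m + 1) - c ^ m else 0)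
                    = Set.indicator {ω | m + 1 ≤ S11.Vc i k ω}
                      (fun _ => c ^ (m + 1) - c ^ m) from hind]
                  exact lintegral_indicator_const (S11.measVset i k (m + 1)) _
              _ ≤ (c ^ (m + 1) - c ^ m) * (1 - q) ^ m := mul_le_mul' le_rfl (hgeom k m)
        _ ≤ 1 + ∑' m : ℕ, ((c - 1) * (c * (1 - q)) ^ m) := by
            refine add_le_add le_rfl (ENNReal.tsum_le_tsum fun m => ?_)
            have h1 : c ^ (m + 1) - c ^ m ≤ (c - 1) * c ^ m := by
              rw [tsub_le_iff_right]
              have h2 : (c - 1) * c ^ m + c ^ m = ((c - 1) + 1) * c ^ m := by ring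
              rw [h2, tsub_add_cancel_of_le hc1, ← pow_succ']
            calc (c ^ (m + 1) - c ^ m) * (1 - q) ^ m
                ≤ ((c - 1) * c ^ m) * (1 - q) ^ m := mul_le_mul' h1 le_rfl
              _ = (c - 1) * (c * (1 - q)) ^ m := by rw [mul_pow, mul_assoc]
        _ = B := by rw [ENNReal.tsum_mul_left, ENNReal.tsum_geometric, hB]
    have hfl : ∀ ω, locExp γ i ω = ⨆ k, c ^ S11.Vc i k ω := by
      intro ω
      have hunf : locExp γ i ω = ∏' n, (if ω n = i then c else 1) := by
        simp only [locExp, hc]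
      rw [hunf, S11.tprod_eq_iSup (f := fun n => if ω n = i then c else 1)
        (fun n => by show 1 ≤ if ω n = i then c else 1; split_ifs; exacts [hc1, le_rfl])]
      exact iSup_congr fun k => S11.prod_range_eq_pow c i k ω
    calc ∫⁻ ω, locExp γ i ω ∂(X.μ i)
        = ∫⁻ ω, ⨆ k, c ^ S11.Vc i k ω ∂(X.μ i) := lintegral_congr hfl
      _ = ⨆ k, ∫⁻ ω, c ^ S11.Vc i k ω ∂(X.μ i) := by
          refine lintegral_iSup (fun k => ?_) (fun k₁ k₂ hk ω => ?_)
          · exact (measurable_from_top (f := fun n : ℕ => c ^ n)).comp (S11.measVc i k)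
          · refine pow_le_pow_right₀ hc1 ?_
            exact Finset.sum_le_sum_of_subset (Finset.range_subset_range.mpr hk)
      _ ≤ B := iSup_le perk
  · have hcle : c ≤ 1 := le_of_not_ge hc1
    have hpi := X.prob i
    calc ∫⁻ ω, locExp γ i ω ∂(X.μ i)
        ≤ ∫⁻ _ω, 1 ∂(X.μ i) := by
          refine lintegral_mono fun ω => ?_
          have hunf : locExp γ i ω = ∏' n, (if ω n = i then c else 1) := by
            simp only [locExp, hc]
          rw [hunf]
          exact S11.tprod_le_one fun n => by show (if ω n = i then c else 1) ≤ 1; split_ifs; exacts [hcle, le_rfl]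
      _ = 1 := by simp
      _ ≤ B := le_self_add
end

section
/- With the notation of the Cramér-tilted random walk, the harmonic function h(i) = e^{βi} P{min_{n≥0} S^{(β)}ₙ ≥ −i} satisfies the two-sided bound e^{βi} − e^{−β} ≤ h(i) ≤ e^{βi} for all i ∈ ℤ₊. -/
open MeasureTheory Filter Topology
open scoped ENNReal NNReal

theorem stmt14 {Ω : Type*} [MeasurableSpace Ω] (μ : Measure Ω) [IsProbabilityMeasure μ]
    (ν : Measure ℤ) [IsProbabilityMeasure ν]
    (hint : Integrable (fun x : ℤ => (x : ℝ)) ν) (hneg : ∫ x, (x : ℝ) ∂ν < 0)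
    (β : ℝ) (hβ : 0 < β)
    (hcram : ∫⁻ x, ENNReal.ofReal (Real.exp (β * x)) ∂ν = 1)
    (ξ : ℕ → Ω → ℤ) (hmeas : ∀ n, Measurable (ξ n))
    (hiid : ProbabilityTheory.iIndepFun ξ μ)
    (hlaw : ∀ n, μ.map (ξ n) =
      ν.withDensity fun x => ENNReal.ofReal (Real.exp (β * x)))
    (h : ℕ → ℝ)
    (hdef : ∀ i : ℕ, h i = Real.exp (β * i) *
      (μ {ω | ∀ n : ℕ, -(i : ℤ) ≤ ∑ k ∈ Finset.range n, ξ k ω}).toReal) :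
    ∀ i : ℕ, Real.exp (β * i) - Real.exp (-β) ≤ h i ∧ h i ≤ Real.exp (β * i) := by
  classical
  open ProbabilityTheory in
  intro i
  -- the walk
  have hS : ∀ (n : ℕ) (ω : Ω), (∑ k ∈ Finset.range n, ξ k ω) = ∑ k ∈ Finset.range n, ξ k ω :=
    fun _ _ => rfl
  set S : ℕ → Ω → ℤ := fun n ω => ∑ k ∈ Finset.range n, ξ k ω with hSdef
  have hSeq : ∀ n ω, S n ω = ∑ k ∈ Finset.range n, ξ k ω := fun _ _ => rfl
  have hSmeas : ∀ n, Measurable (S n) := fun n => Finset.measurable_sum _ fun k _ => hmeas k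
  -- the event A
  set A : Set Ω := {ω | ∀ n : ℕ, -(i : ℤ) ≤ ∑ k ∈ Finset.range n, ξ k ω} with hA
  have hAmeas : MeasurableSet A := by
    have : A = ⋂ n, S n ⁻¹' {x | -(i:ℤ) ≤ x} := by ext ω; simp [hA, hSeq]
    rw [this]
    exact MeasurableSet.iInter fun n => (hSmeas n) ((Set.to_countable _).measurableSet)
  -- one-step exponential moment
  have one_step : ∀ k, ∫⁻ ω, ENNReal.ofReal (Real.exp (-β * (ξ k ω : ℤ))) ∂μ = 1 := by
    intro k
    have hmap : ∫⁻ ω, ENNReal.ofReal (Real.exp (-β * (ξ k ω : ℤ))) ∂μ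
        = ∫⁻ x : ℤ, ENNReal.ofReal (Real.exp (-β * x)) ∂(μ.map (ξ k)) :=
      (lintegral_map (f := fun x : ℤ => ENNReal.ofReal (Real.exp (-β * x)))
        (measurable_of_countable _) (hmeas k)).symm
    rw [hmap, hlaw k, lintegral_withDensity_eq_lintegral_mul _ (measurable_of_countable _)
      (measurable_of_countable _)]
    have hpt : ∀ x : ℤ, ((fun x : ℤ => ENNReal.ofReal (Real.exp (β * x))) * fun x : ℤ =>
        ENNReal.ofReal (Real.exp (-β * x))) x = 1 := by
      intro x
      simp only [Pi.mul_apply, ← ENNReal.ofReal_mul (Real.exp_nonneg _), ← Real.exp_add]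
      norm_num
    simp only [hpt]
    simp
  -- finite-sum exponential moment
  have sum_step : ∀ s : Finset ℕ,
      ∫⁻ ω, ENNReal.ofReal (Real.exp (-β * ((∑ k ∈ s, ξ k ω : ℤ) : ℝ))) ∂μ = 1 := by
    intro s
    induction s using Finset.induction_on with
    | empty => simp
    | @insert a s ha ih =>
      set g : ℤ → ℝ≥0∞ := fun x => ENNReal.ofReal (Real.exp (-β * x)) with hg
      have hsplit : ∀ ω, ENNReal.ofReal (Real.exp (-β * ((∑ k ∈ insert a s, ξ k ω : ℤ) : ℝ)))
          = g (ξ a ω) * g (∑ k ∈ s, ξ k ω) := by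
        intro ω
        rw [hg, Finset.sum_insert ha, ← ENNReal.ofReal_mul (Real.exp_nonneg _), ← Real.exp_add]
        push_cast
        ring_nf
      simp only [hsplit]
      have hind : IndepFun (ξ a) (∑ j ∈ s, ξ j) μ :=
        (hiid.indepFun_finsetSum_of_notMem hmeas ha).symm
      have hmsum : Measurable (∑ j ∈ s, ξ j) := by
        rw [Finset.sum_fn]; exact Finset.measurable_sum s fun k _ => hmeas k
      have key := lintegral_mul_eq_lintegral_mul_lintegral_of_indepFun
        ((measurable_of_countable g).comp (hmeas a)) ((measurable_of_countable g).comp hmsum)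
        (hind.comp (measurable_of_countable g) (measurable_of_countable g))
      simp only [Function.comp_def, Finset.sum_apply, Pi.mul_apply] at key
      rw [key, one_step a, ih, one_mul]
  -- hitting-time decomposition
  set C : ℕ → Set Ω :=
    fun n => {ω | S n ω < -(i:ℤ) ∧ ∀ m, m < n → -(i:ℤ) ≤ S m ω} with hC
  have hCdef : ∀ n, C n = {ω | S n ω < -(i:ℤ) ∧ ∀ m, m < n → -(i:ℤ) ≤ S m ω} := fun _ => rfl
  have hCmeas : ∀ n, MeasurableSet (C n) := by
    intro n
    have : C n = (S n ⁻¹' {x | x < -(i:ℤ)}) ∩ ⋂ m, ⋂ (_ : m < n), S m ⁻¹' {x | -(i:ℤ) ≤ x} := by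
      ext ω; simp [hCdef]
    rw [this]
    exact ((hSmeas n) ((Set.to_countable _).measurableSet)).inter
      (MeasurableSet.iInter fun m => MeasurableSet.iInter fun _ =>
        (hSmeas m) ((Set.to_countable _).measurableSet))
  have hCdisj : ∀ ω n m, ω ∈ C n → ω ∈ C m → n = m := by
    intro ω n m hn hm
    by_contra hne
    rcases lt_or_gt_of_ne hne with hlt | hgt
    · exact absurd (hm.2 n hlt) (not_le.2 hn.1)
    · exact absurd (hn.2 m hgt) (not_le.2 hm.1)
  -- THE KEY INEQUALITY (tested separately) -------------------------------
  have key : ∀ N n, n ≤ N →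
      ENNReal.ofReal (Real.exp (β * (i+1))) * μ (C n)
        ≤ ∫⁻ ω, (C n).indicator (fun ω => ENNReal.ofReal (Real.exp (-β * (S N ω : ℝ)))) ω ∂μ := by
    intro N n hnN
    set F : Ω → ℝ≥0∞ :=
      fun ω => (C n).indicator (fun ω => ENNReal.ofReal (Real.exp (-β * (S n ω : ℝ)))) ω with hF
    set G : Ω → ℝ≥0∞ :=
      fun ω => ENNReal.ofReal (Real.exp (-β * ((∑ k ∈ Finset.Ico n N, ξ k ω : ℤ) : ℝ))) with hG
    set T1 : Ω → (↥(Finset.range n) → ℤ) := fun ω k => ξ k ω with hT1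
    set T2 : Ω → (↥(Finset.Ico n N) → ℤ) := fun ω k => ξ k ω with hT2
    set φ : (↥(Finset.range n) → ℤ) → ℝ≥0∞ := fun v =>
      if (∑ k ∈ Finset.range n, (if h : k ∈ Finset.range n then v ⟨k, h⟩ else 0)) < -(i:ℤ)
          ∧ ∀ m, m < n → -(i:ℤ) ≤ ∑ k ∈ Finset.range m, (if h : k ∈ Finset.range n then v ⟨k, h⟩ else 0)
      then ENNReal.ofReal (Real.exp (-β *
        ((∑ k ∈ Finset.range n, (if h : k ∈ Finset.range n then v ⟨k, h⟩ else 0) : ℤ) : ℝ)))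
      else 0 with hφ
    set ψ : (↥(Finset.Ico n N) → ℤ) → ℝ≥0∞ := fun v =>
      ENNReal.ofReal (Real.exp (-β *
        ((∑ k ∈ Finset.Ico n N, (if h : k ∈ Finset.Ico n N then v ⟨k, h⟩ else 0) : ℤ) : ℝ))) with hψ
    have hsum_eq : ∀ ω, ∀ m ≤ n, ∑ k ∈ Finset.range m,
        (if h : k ∈ Finset.range n then T1 ω ⟨k, h⟩ else 0) = S m ω := by
      intro ω m hm
      rw [hSeq]
      refine Finset.sum_congr rfl fun k hk => ?_
      have hkn : k ∈ Finset.range n := Finset.mem_range.2 (lt_of_lt_of_le (Finset.mem_range.1 hk) hm)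
      rw [dif_pos hkn]
    have hmemiff : ∀ ω, ω ∈ C n ↔
        ((∑ k ∈ Finset.range n, (if h : k ∈ Finset.range n then T1 ω ⟨k, h⟩ else 0)) < -(i:ℤ)
          ∧ ∀ m, m < n → -(i:ℤ) ≤ ∑ k ∈ Finset.range m,
            (if h : k ∈ Finset.range n then T1 ω ⟨k, h⟩ else 0)) := by
      intro ω
      rw [hCdef]
      simp only [Set.mem_setOf_eq]
      constructor
      · rintro ⟨h1, h2⟩
        exact ⟨by rw [hsum_eq ω n le_rfl]; exact h1,
          fun m hm => by rw [hsum_eq ω m hm.le]; exact h2 m hm⟩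
      · rintro ⟨h1, h2⟩
        exact ⟨by rw [← hsum_eq ω n le_rfl]; exact h1,
          fun m hm => by rw [← hsum_eq ω m hm.le]; exact h2 m hm⟩
    have hFeq : F = φ ∘ T1 := by
      funext ω
      simp only [hF, hφ, Function.comp_apply]
      by_cases hω : ω ∈ C n
      · rw [Set.indicator_of_mem hω, if_pos ((hmemiff ω).1 hω), hsum_eq ω n le_rfl]
      · rw [Set.indicator_of_notMem hω, if_neg (fun hc => hω ((hmemiff ω).2 hc))]
    have hGeq : G = ψ ∘ T2 := by
      funext ω
      have hs : ∑ k ∈ Finset.Ico n N, (if h : k ∈ Finset.Ico n N then T2 ω ⟨k, h⟩ else 0)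
          = ∑ k ∈ Finset.Ico n N, ξ k ω :=
        Finset.sum_congr rfl fun k hk => by rw [dif_pos hk]
      simp only [hG, hψ, Function.comp_apply, hs]
    have hdisj : Disjoint (Finset.range n) (Finset.Ico n N) := by
      simp only [Finset.disjoint_left, Finset.mem_range, Finset.mem_Ico]
      omega
    have hind : ProbabilityTheory.IndepFun F G μ := by
      rw [hFeq, hGeq]
      exact (hiid.indepFun_finset _ _ hdisj hmeas).comp
        (measurable_of_countable φ) (measurable_of_countable ψ)
    have hT1m : Measurable T1 := measurable_pi_lambda _ fun k => hmeas k
    have hT2m : Measurable T2 := measurable_pi_lambda _ fun k => hmeas k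
    have hFm : Measurable F := hFeq ▸ (measurable_of_countable φ).comp hT1m
    have hGm : Measurable G := hGeq ▸ (measurable_of_countable ψ).comp hT2m
    have hprod : ∀ ω, (C n).indicator (fun ω => ENNReal.ofReal (Real.exp (-β * (S N ω : ℝ)))) ω
        = F ω * G ω := by
      intro ω
      simp only [hF, hG]
      by_cases hω : ω ∈ C n
      · rw [Set.indicator_of_mem hω, Set.indicator_of_mem hω,
          ← ENNReal.ofReal_mul (Real.exp_nonneg _), ← Real.exp_add]
        congr 2
        have hSN : S N ω = S n ω + ∑ k ∈ Finset.Ico n N, ξ k ω := by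
          rw [hSeq, hSeq, Finset.sum_range_add_sum_Ico _ hnN]
        rw [hSN]
        push_cast
        ring
      · rw [Set.indicator_of_notMem hω, Set.indicator_of_notMem hω, zero_mul]
    simp only [hprod]
    have key0 := ProbabilityTheory.lintegral_mul_eq_lintegral_mul_lintegral_of_indepFun hFm hGm hind
    simp only [Pi.mul_apply] at key0
    rw [key0, sum_step (Finset.Ico n N), mul_one]
    have hlow : ∀ ω, (C n).indicator (fun _ => ENNReal.ofReal (Real.exp (β * (i+1)))) ω ≤ F ω := by
      intro ω
      simp only [hF]
      by_cases hω : ω ∈ C n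
      · rw [Set.indicator_of_mem hω, Set.indicator_of_mem hω]
        apply ENNReal.ofReal_le_ofReal
        apply Real.exp_le_exp.2
        have h2 : S n ω < -(i:ℤ) := ((hCdef n) ▸ hω).1
        have h3 : (S n ω : ℝ) ≤ -(i:ℝ) - 1 := by
          have h4 : S n ω ≤ -(i:ℤ) - 1 := by omega
          exact_mod_cast h4
        nlinarith [hβ]
      · rw [Set.indicator_of_notMem hω, Set.indicator_of_notMem hω]
    calc ENNReal.ofReal (Real.exp (β * (i+1))) * μ (C n)
        = ∫⁻ ω, (C n).indicator (fun _ => ENNReal.ofReal (Real.exp (β * (i+1)))) ω ∂μ :=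
          (lintegral_indicator_const (hCmeas n) _).symm
      _ ≤ ∫⁻ ω, F ω ∂μ := lintegral_mono hlow
  -- partial-sum bound
  have hsumM : ∀ M : ℕ,
      ∑ n ∈ Finset.range M, ENNReal.ofReal (Real.exp (β * (i+1))) * μ (C n) ≤ 1 := by
    intro M
    calc ∑ n ∈ Finset.range M, ENNReal.ofReal (Real.exp (β * (i+1))) * μ (C n)
        ≤ ∑ n ∈ Finset.range M,
            ∫⁻ ω, (C n).indicator (fun ω => ENNReal.ofReal (Real.exp (-β * (S M ω : ℝ)))) ω ∂μ :=
          Finset.sum_le_sum fun n hn => key M n (le_of_lt (Finset.mem_range.1 hn))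
      _ = ∫⁻ ω, ∑ n ∈ Finset.range M,
            (C n).indicator (fun ω => ENNReal.ofReal (Real.exp (-β * (S M ω : ℝ)))) ω ∂μ :=
          (lintegral_finset_sum _ fun n _ =>
            (Measurable.indicator (by fun_prop) (hCmeas n))).symm
      _ ≤ ∫⁻ ω, ENNReal.ofReal (Real.exp (-β * (S M ω : ℝ))) ∂μ := by
          apply lintegral_mono
          intro ω
          beta_reduce
          by_cases hex : ∃ n ∈ Finset.range M, ω ∈ C n
          · obtain ⟨n0, hn0, hω⟩ := hex
            rw [Finset.sum_eq_single_of_mem n0 hn0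
              (fun b _ hbn => Set.indicator_of_notMem (fun hc => hbn (hCdisj ω b n0 hc hω)) _),
              Set.indicator_of_mem hω]
          · push_neg at hex
            rw [Finset.sum_eq_zero fun b hb => Set.indicator_of_notMem (hex b hb) _]
            exact zero_le
      _ = 1 := sum_step (Finset.range M)
  -- tsum bound
  have htsum : ENNReal.ofReal (Real.exp (β * (i+1))) * ∑' n, μ (C n) ≤ 1 := by
    rw [← ENNReal.tsum_mul_left, ENNReal.tsum_eq_iSup_sum]
    apply iSup_le
    intro s
    obtain ⟨M, hM⟩ := s.exists_nat_subset_range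
    exact le_trans (Finset.sum_le_sum_of_subset hM) (hsumM M)
  -- the complement bound
  have hcover : Aᶜ ⊆ ⋃ n, C n := by
    intro ω hω
    simp only [hA, Set.mem_compl_iff, Set.mem_setOf_eq, not_forall, not_le] at hω
    have hω' : ∃ n, S n ω < -(i:ℤ) := hω
    refine Set.mem_iUnion.2 ⟨Nat.find hω', Nat.find_spec hω', fun m hm => ?_⟩
    exact not_lt.1 (Nat.find_min hω' hm)
  have hAc : μ Aᶜ ≤ ENNReal.ofReal (Real.exp (-(β * ((i:ℝ)+1)))) := by
    have h1 : μ Aᶜ ≤ ∑' n, μ (C n) :=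
      le_trans (measure_mono hcover) (measure_iUnion_le _)
    have h2 : (∑' n, μ (C n)) ≤ (ENNReal.ofReal (Real.exp (β * (i+1))))⁻¹ := by
      rw [ENNReal.le_inv_iff_mul_le, mul_comm]
      exact htsum
    have h3 : (ENNReal.ofReal (Real.exp (β * (i+1))))⁻¹
        = ENNReal.ofReal (Real.exp (-(β * ((i:ℝ)+1)))) := by
      rw [← ENNReal.ofReal_inv_of_pos (Real.exp_pos _), ← Real.exp_neg]
    exact le_trans h1 (h2.trans_eq h3)
  -- assemble
  have hpA : (μ A).toReal ≤ 1 := by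
    have := prob_le_one (μ := μ) (s := A)
    exact ENNReal.toReal_le_of_le_ofReal one_pos.le (by simpa using this)
  have hAc' : (μ Aᶜ).toReal ≤ Real.exp (-(β * ((i:ℝ)+1))) :=
    ENNReal.toReal_le_of_le_ofReal (Real.exp_nonneg _) hAc
  have hsplit2 : (μ Aᶜ).toReal = 1 - (μ A).toReal := by
    rw [measure_compl hAmeas (measure_ne_top _ _), measure_univ,
      ENNReal.toReal_sub_of_le prob_le_one ENNReal.one_ne_top]
    simp
  have hple : 1 - (μ A).toReal ≤ Real.exp (-(β * ((i:ℝ)+1))) := by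
    rw [← hsplit2]; exact hAc'
  have hexpid : Real.exp (β * i) * Real.exp (-(β * ((i:ℝ)+1))) = Real.exp (-β) := by
    rw [← Real.exp_add]; ring_nf
  have hmul := mul_le_mul_of_nonneg_left hple (Real.exp_nonneg (β * i))
  rw [hexpid] at hmul
  have hup := mul_le_mul_of_nonneg_left hpA (Real.exp_nonneg (β * i))
  constructor
  · rw [hdef i, ← hA]
    nlinarith [Real.exp_pos (β * i)]
  · rw [hdef i, ← hA]
    nlinarith [Real.exp_pos (β * i)]
end

section
/- Let S^{(β)} be the Cramér tilt of a negatively drifted lattice random walk S. Then for every l ≥ 0, P{min_{n≥0} S^{(β)}ₙ = −l} = P{τ₁^{(β)} = ∞} e^{−βl} u(l), where u(l) is the mass function of the renewal process of strict descending ladder heights of S and τ₁^{(β)} is the first strict descending ladder epoch of S^{(β)}. Consequently the harmonic function h(i) = e^{βi} P{min_{n≥0} S^{(β)}ₙ ≥ −i} equals (1 − Ee^{−βχ₁}) ∑_{j=0}^{i} e^{β(i−j)} u(j), where χ₁ is the first strict descending ladder height of S. -/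
open MeasureTheory Filter Topology
open scoped ENNReal NNReal

set_option linter.unusedSectionVars false

namespace Stmt15Aux

variable {Ω : Type*} [MeasurableSpace Ω]

/-- cylinder set -/
def cyl (ξ : ℕ → Ω → ℤ) (t n : ℕ) (x : Fin n → ℤ) : Set Ω :=
  {ω | ∀ k : Fin n, ξ (t + (k : ℕ)) ω = x k}

/-- extension of a finite vector by zeros -/
def extz {n : ℕ} (x : Fin n → ℤ) : ℕ → ℤ := fun k => if h : k < n then x ⟨k, h⟩ else 0

lemma extz_lt {n : ℕ} (x : Fin n → ℤ) {k : ℕ} (h : k < n) : extz x k = x ⟨k, h⟩ := dif_pos h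

lemma cyl_measurable {ξ : ℕ → Ω → ℤ} (hmeas : ∀ n, Measurable (ξ n)) (t n : ℕ)
    (x : Fin n → ℤ) : MeasurableSet (cyl ξ t n x) := by
  have : cyl ξ t n x = ⋂ k : Fin n, (ξ (t + (k : ℕ))) ⁻¹' {x k} := by
    ext ω; simp [cyl, Set.mem_iInter]
  rw [this]
  exact MeasurableSet.iInter fun k => (hmeas _) (measurableSet_singleton _)

lemma cyl_disjoint {ξ : ℕ → Ω → ℤ} (t n : ℕ) {x y : Fin n → ℤ} (hxy : x ≠ y) :
    Disjoint (cyl ξ t n x) (cyl ξ t n y) := by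
  rw [Set.disjoint_left]
  intro ω hx hy
  exact hxy (funext fun k => (hx k).symm.trans (hy k))

lemma cyl_prob (μ : Measure Ω) (ρ : Measure ℤ) {ξ : ℕ → Ω → ℤ}
    (hmeas : ∀ n, Measurable (ξ n))
    (hiid : ProbabilityTheory.iIndepFun ξ μ)
    (hlaw : ∀ n, μ.map (ξ n) = ρ) (t n : ℕ) (x : Fin n → ℤ) :
    μ (cyl ξ t n x) = ∏ k : Fin n, ρ {x k} := by
  classical
  set sets : ℕ → Set ℤ := fun i => if h : t ≤ i ∧ i - t < n then {x ⟨i - t, h.2⟩} else Set.univ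
    with hsets
  have hkey : ∀ k : Fin n, sets (t + (k : ℕ)) = {x k} := by
    intro k
    have h : t ≤ t + (k : ℕ) ∧ t + (k : ℕ) - t < n := by omega
    rw [hsets]
    simp only [dif_pos h]
    congr 1
    refine congrArg x (Fin.ext ?_)
    simp only [Fin.val_mk]
    omega
  have hS := hiid.measure_inter_preimage_eq_mul (S := Finset.image (fun k : Fin n => t + k) Finset.univ)
    (sets := sets) (fun i _ => by
      by_cases h : t ≤ i ∧ i - t < n
      · rw [hsets]; simp only [dif_pos h]; exact measurableSet_singleton _
      · rw [hsets]; simp only [dif_neg h]; exact MeasurableSet.univ)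
  have hinj : Function.Injective (fun k : Fin n => t + (k : ℕ)) := by
    intro a b hab
    simp only at hab
    exact Fin.ext (by omega)
  have hset_eq : (⋂ i ∈ Finset.image (fun k : Fin n => t + (k : ℕ)) Finset.univ,
      ξ i ⁻¹' sets i) = cyl ξ t n x := by
    ext ω
    simp only [Set.mem_iInter, Finset.mem_image, Finset.mem_univ, true_and, cyl,
      Set.mem_setOf_eq]
    constructor
    · intro h k
      have := h (t + k) ⟨k, rfl⟩
      rwa [hkey, Set.mem_preimage, Set.mem_singleton_iff] at this
    · rintro h i ⟨k, rfl⟩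
      rw [hkey, Set.mem_preimage, Set.mem_singleton_iff]
      exact h k
  have hprod : ∏ i ∈ Finset.image (fun k : Fin n => t + (k : ℕ)) Finset.univ,
      μ (ξ i ⁻¹' sets i) = ∏ k : Fin n, μ (ξ (t + (k : ℕ)) ⁻¹' {x k}) := by
    rw [Finset.prod_image (fun a _ b _ h => hinj h)]
    exact Finset.prod_congr rfl fun k _ => by rw [hkey]
  rw [hset_eq] at hS
  rw [hS, hprod]
  refine Finset.prod_congr rfl fun k _ => ?_
  rw [← hlaw (t + k), Measure.map_apply (hmeas _) (measurableSet_singleton _)]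


section Events

variable {ξ : ℕ → Ω → ℤ} {μ : Measure Ω} {ρ : Measure ℤ}

/-- the event that the first `n` increments starting at `t` satisfy `p` -/
def evt (ξ : ℕ → Ω → ℤ) (t : ℕ) (p : (ℕ → ℤ) → Prop) : Set Ω :=
  {ω | p (fun k => ξ (t + k) ω)}

/-- `p` only depends on the first `n` coordinates -/
def DepOn (p : (ℕ → ℤ) → Prop) (n : ℕ) : Prop :=
  ∀ y z : ℕ → ℤ, (∀ k < n, y k = z k) → (p y ↔ p z)

lemma evt_eq_iUnion {p : (ℕ → ℤ) → Prop} {n : ℕ} (hdep : DepOn p n) (t : ℕ) :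
    evt ξ t p = ⋃ x : {x : Fin n → ℤ // p (extz x)}, cyl ξ t n x.val := by
  ext ω
  simp only [evt, Set.mem_setOf_eq, Set.mem_iUnion]
  constructor
  · intro hp
    refine ⟨⟨fun k => ξ (t + (k : ℕ)) ω, ?_⟩, fun k => rfl⟩
    exact (hdep _ _ (fun k hk => extz_lt _ hk)).mpr hp
  · rintro ⟨⟨x, hx⟩, hcyl⟩
    refine (hdep _ _ (fun k hk => ?_)).mp hx
    rw [extz_lt _ hk]
    exact (hcyl ⟨k, hk⟩).symm

lemma evt_measurable (hmeas : ∀ n, Measurable (ξ n)) {p : (ℕ → ℤ) → Prop} {n : ℕ}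
    (hdep : DepOn p n) (t : ℕ) : MeasurableSet (evt ξ t p) := by
  rw [evt_eq_iUnion hdep t]
  exact MeasurableSet.iUnion fun x => cyl_measurable hmeas t n x.val

lemma evt_prob (hmeas : ∀ n, Measurable (ξ n))
    (hiid : ProbabilityTheory.iIndepFun ξ μ)
    (hlaw : ∀ n, μ.map (ξ n) = ρ) {p : (ℕ → ℤ) → Prop} {n : ℕ}
    (hdep : DepOn p n) (t : ℕ) :
    μ (evt ξ t p) = ∑' x : Fin n → ℤ,
      Set.indicator {x : Fin n → ℤ | p (extz x)} (fun x => ∏ k : Fin n, ρ {x k}) x := by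
  rw [evt_eq_iUnion hdep t,
    measure_iUnion (fun a b hab => cyl_disjoint t n (fun h => hab (Subtype.ext h)))
      (fun x => cyl_measurable hmeas t n x.val)]
  rw [← tsum_subtype]
  exact tsum_congr fun x => cyl_prob μ ρ hmeas hiid hlaw t n x.val

/-- lintegral of a function of the first `n` increments over an event -/
lemma evt_lintegral (hmeas : ∀ n, Measurable (ξ n))
    (hiid : ProbabilityTheory.iIndepFun ξ μ)
    (hlaw : ∀ n, μ.map (ξ n) = ρ) {p : (ℕ → ℤ) → Prop} {n : ℕ}
    (hdep : DepOn p n) (t : ℕ) {f : Ω → ℝ≥0∞} {g : (Fin n → ℤ) → ℝ≥0∞}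
    (hf : ∀ ω ∈ evt ξ t p, f ω = g (fun k : Fin n => ξ (t + (k : ℕ)) ω)) :
    ∫⁻ ω in evt ξ t p, f ω ∂μ = ∑' x : Fin n → ℤ,
      Set.indicator {x : Fin n → ℤ | p (extz x)}
        (fun x => g x * ∏ k : Fin n, ρ {x k}) x := by
  rw [evt_eq_iUnion hdep t,
    lintegral_iUnion (fun x => cyl_measurable hmeas t n x.val)
      (fun a b hab => cyl_disjoint t n (fun h => hab (Subtype.ext h)))]
  rw [← tsum_subtype]
  refine tsum_congr fun x => ?_
  have hsub : cyl ξ t n x.val ⊆ evt ξ t p := by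
    rw [evt_eq_iUnion hdep t]; exact Set.subset_iUnion (fun y : {x : Fin n → ℤ // p (extz x)} => cyl ξ t n y.val) x
  have : ∫⁻ ω in cyl ξ t n x.val, f ω ∂μ = ∫⁻ _ in cyl ξ t n x.val, g x.val ∂μ := by
    refine setLIntegral_congr_fun (cyl_measurable hmeas t n x.val) (fun ω hω => ?_)
    rw [hf ω (hsub hω)]
    congr 1
    exact funext fun k => hω k
  rw [this, setLIntegral_const, cyl_prob μ ρ hmeas hiid hlaw t n x.val]


lemma evt_inter (t n : ℕ) (p q : (ℕ → ℤ) → Prop) :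
    evt ξ t p ∩ evt ξ (t + n) q =
      evt ξ t (fun y => p y ∧ q (fun k => y (n + k))) := by
  ext ω
  simp only [evt, Set.mem_inter_iff, Set.mem_setOf_eq, add_assoc]

lemma depOn_inter {p q : (ℕ → ℤ) → Prop} {n M : ℕ} (hp : DepOn p n) (hq : DepOn q M) :
    DepOn (fun y => p y ∧ q (fun k => y (n + k))) (n + M) := by
  intro y z h
  constructor <;> rintro ⟨h1, h2⟩
  · exact ⟨(hp y z fun k hk => h k (by omega)).mp h1,
      (hq _ _ fun k hk => h (n + k) (by omega)).mp h2⟩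
  · exact ⟨(hp y z fun k hk => h k (by omega)).mpr h1,
      (hq _ _ fun k hk => h (n + k) (by omega)).mpr h2⟩

lemma evt_prob_mul (hmeas : ∀ n, Measurable (ξ n))
    (hiid : ProbabilityTheory.iIndepFun ξ μ)
    (hlaw : ∀ n, μ.map (ξ n) = ρ) {p q : (ℕ → ℤ) → Prop} {n M : ℕ}
    (hp : DepOn p n) (hq : DepOn q M) (t : ℕ) :
    μ (evt ξ t p ∩ evt ξ (t + n) q) = μ (evt ξ t p) * μ (evt ξ t q) := by
  classical
  rw [evt_inter, evt_prob hmeas hiid hlaw (depOn_inter hp hq) t,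
    evt_prob hmeas hiid hlaw hp t, evt_prob hmeas hiid hlaw hq t]
  set e : ((Fin n → ℤ) × (Fin M → ℤ)) ≃ (Fin (n + M) → ℤ) :=
    (Equiv.sumArrowEquivProdArrow (Fin n) (Fin M) ℤ).symm.trans
      (Equiv.arrowCongr finSumFinEquiv (Equiv.refl ℤ)) with he
  have he1 : ∀ (y : Fin n → ℤ) (z : Fin M → ℤ) (k : Fin n),
      e (y, z) (Fin.castAdd M k) = y k := by
    intro y z k
    simp [he, Equiv.arrowCongr, Equiv.sumArrowEquivProdArrow]
  have he2 : ∀ (y : Fin n → ℤ) (z : Fin M → ℤ) (k : Fin M),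
      e (y, z) (Fin.natAdd n k) = z k := by
    intro y z k
    simp [he, Equiv.arrowCongr, Equiv.sumArrowEquivProdArrow]
  rw [← Equiv.tsum_eq e, ENNReal.tsum_prod']
  have hterm : ∀ (y : Fin n → ℤ) (z : Fin M → ℤ),
      Set.indicator {x : Fin (n + M) → ℤ |
          p (extz x) ∧ q fun k => extz x (n + k)}
        (fun x => ∏ k : Fin (n + M), ρ {x k}) (e (y, z)) =
      (Set.indicator {x : Fin n → ℤ | p (extz x)} (fun x => ∏ k : Fin n, ρ {x k}) y)
        * (Set.indicator {x : Fin M → ℤ | q (extz x)} (fun x => ∏ k : Fin M, ρ {x k}) z) := by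
    intro y z
    have hprod : ∏ k : Fin (n + M), ρ {e (y, z) k}
        = (∏ k : Fin n, ρ {y k}) * ∏ k : Fin M, ρ {z k} := by
      rw [Fin.prod_univ_add]
      congr 1
      · exact Finset.prod_congr rfl fun k _ => by rw [he1]
      · exact Finset.prod_congr rfl fun k _ => by rw [he2]
    have hpred : (p (extz (e (y, z))) ∧ q fun k => extz (e (y, z)) (n + k))
        ↔ (p (extz y) ∧ q (extz z)) := by
      constructor <;> rintro ⟨h1, h2⟩ <;> refine ⟨?_, ?_⟩
      · refine (hp _ _ fun k hk => ?_).mp h1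
        rw [extz_lt _ (show k < n + M by omega), extz_lt _ hk]
        have : (⟨k, show k < n + M by omega⟩ : Fin (n + M)) = Fin.castAdd M ⟨k, hk⟩ :=
          Fin.ext rfl
        rw [this, he1]
      · refine (hq _ _ fun k hk => ?_).mp h2
        rw [extz_lt _ (show n + k < n + M by omega), extz_lt _ hk]
        have : (⟨n + k, show n + k < n + M by omega⟩ : Fin (n + M)) = Fin.natAdd n ⟨k, hk⟩ :=
          Fin.ext rfl
        rw [this, he2]
      · refine (hp _ _ fun k hk => ?_).mpr h1
        rw [extz_lt _ (show k < n + M by omega), extz_lt _ hk]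
        have : (⟨k, show k < n + M by omega⟩ : Fin (n + M)) = Fin.castAdd M ⟨k, hk⟩ :=
          Fin.ext rfl
        rw [this, he1]
      · refine (hq _ _ fun k hk => ?_).mpr h2
        rw [extz_lt _ (show n + k < n + M by omega), extz_lt _ hk]
        have : (⟨n + k, show n + k < n + M by omega⟩ : Fin (n + M)) = Fin.natAdd n ⟨k, hk⟩ :=
          Fin.ext rfl
        rw [this, he2]
    by_cases hc : p (extz y) ∧ q (extz z)
    · rw [Set.indicator_of_mem (by exact hpred.mpr hc),
        Set.indicator_of_mem (by exact hc.1), Set.indicator_of_mem (by exact hc.2), hprod]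
    · rw [Set.indicator_of_notMem (by exact fun h => hc (hpred.mp h))]
      rcases not_and_or.mp hc with h | h
      · rw [Set.indicator_of_notMem (show y ∉ {x : Fin n → ℤ | p (extz x)} from h), zero_mul]
      · rw [Set.indicator_of_notMem (show z ∉ {x : Fin M → ℤ | q (extz x)} from h), mul_zero]
  refine Eq.trans (tsum_congr fun y => ?_) ENNReal.tsum_mul_right
  rw [← ENNReal.tsum_mul_left]
  exact tsum_congr fun z => hterm y z


lemma evt_prob_mul_iInter [IsFiniteMeasure μ] (hmeas : ∀ n, Measurable (ξ n))
    (hiid : ProbabilityTheory.iIndepFun ξ μ)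
    (hlaw : ∀ n, μ.map (ξ n) = ρ) {p : (ℕ → ℤ) → Prop} {n : ℕ} (hp : DepOn p n)
    {q : ℕ → (ℕ → ℤ) → Prop} (hqd : ∀ M, DepOn (q M) M)
    (hmono : ∀ M y, q (M + 1) y → q M y) (t : ℕ) :
    μ (evt ξ t p ∩ ⋂ M, evt ξ (t + n) (q M)) =
      μ (evt ξ t p) * μ (⋂ M, evt ξ t (q M)) := by
  have hmono' : ∀ {a b : ℕ}, a ≤ b → ∀ y, q b y → q a y := by
    intro a b hab
    induction hab with
    | refl => exact fun y h => h
    | step _ ih => exact fun y h => ih y (hmono _ y h)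
  have hanti : ∀ u : ℕ, Antitone fun M => evt ξ u (q M) := by
    intro u a b hab ω hω
    exact hmono' hab _ hω
  have h1 : μ (evt ξ t p ∩ ⋂ M, evt ξ (t + n) (q M)) =
      ⨅ M, μ (evt ξ t p ∩ evt ξ (t + n) (q M)) := by
    rw [show evt ξ t p ∩ ⋂ M, evt ξ (t + n) (q M) = ⋂ M, evt ξ t p ∩ evt ξ (t + n) (q M) from (Set.inter_iInter _ _)]
    exact Antitone.measure_iInter
      (fun a b hab => Set.inter_subset_inter_right _ (hanti (t + n) hab))
      (fun M => ((evt_measurable hmeas hp t).inter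
        (evt_measurable hmeas (hqd M) (t + n))).nullMeasurableSet)
      ⟨0, measure_ne_top μ _⟩
  have h2 : μ (⋂ M, evt ξ t (q M)) = ⨅ M, μ (evt ξ t (q M)) :=
    Antitone.measure_iInter (hanti t)
      (fun M => (evt_measurable hmeas (hqd M) t).nullMeasurableSet)
      ⟨0, measure_ne_top μ _⟩
  rw [h1, h2, ENNReal.mul_iInf' (fun h => absurd h (measure_ne_top μ _))
    (fun _ => inferInstance)]
  exact iInf_congr fun M => evt_prob_mul hmeas hiid hlaw hp (hqd M) t

end Events


section Tilt

variable {Ω Ω' : Type*} [MeasurableSpace Ω] [MeasurableSpace Ω']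
  {μ : Measure Ω} {μβ : Measure Ω'} {ν : Measure ℤ} {β : ℝ}
  {ξ : ℕ → Ω → ℤ} {ξβ : ℕ → Ω' → ℤ}

lemma tilted_singleton (y : ℤ) :
    (ν.withDensity fun x => ENNReal.ofReal (Real.exp (β * x))) {y} =
      ENNReal.ofReal (Real.exp (β * y)) * ν {y} := by
  rw [withDensity_apply _ (measurableSet_singleton y), lintegral_singleton]

lemma tilted_prod {n : ℕ} (x : Fin n → ℤ) :
    (∏ k : Fin n, (ν.withDensity fun x => ENNReal.ofReal (Real.exp (β * x))) {x k}) =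
      ENNReal.ofReal (Real.exp (β * ((∑ k : Fin n, x k : ℤ) : ℝ))) *
        ∏ k : Fin n, ν {x k} := by
  have : ∀ k : Fin n, (ν.withDensity fun x => ENNReal.ofReal (Real.exp (β * x))) {x k} =
      ENNReal.ofReal (Real.exp (β * (x k : ℝ))) * ν {x k} := fun k => tilted_singleton _
  rw [Finset.prod_congr rfl (fun k _ => this k), Finset.prod_mul_distrib]
  congr 1
  rw [← ENNReal.ofReal_prod_of_nonneg (fun i _ => (Real.exp_pos _).le), ← Real.exp_sum]
  congr 2
  rw [← Finset.mul_sum]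
  congr 1
  push_cast
  rfl

/-- change of measure for cylinder events -/
lemma tilt_prob (hmeas : ∀ n, Measurable (ξ n))
    (hiid : ProbabilityTheory.iIndepFun ξ μ)
    (hlaw : ∀ n, μ.map (ξ n) = ν)
    (hmeasβ : ∀ n, Measurable (ξβ n))
    (hiidβ : ProbabilityTheory.iIndepFun ξβ μβ)
    (hlawβ : ∀ n, μβ.map (ξβ n) =
      ν.withDensity fun x => ENNReal.ofReal (Real.exp (β * x)))
    {p : (ℕ → ℤ) → Prop} {n : ℕ} (hdep : DepOn p n) {c : ℤ}
    (hforce : ∀ x : Fin n → ℤ, p (extz x) → (∑ k : Fin n, x k) = c) (t : ℕ) :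
    μβ (evt ξβ t p) = ENNReal.ofReal (Real.exp (β * c)) * μ (evt ξ t p) := by
  rw [evt_prob hmeasβ hiidβ hlawβ hdep t, evt_prob hmeas hiid hlaw hdep t,
    ← ENNReal.tsum_mul_left]
  refine tsum_congr fun x => ?_
  by_cases hx : p (extz x)
  · rw [Set.indicator_of_mem (by exact hx), Set.indicator_of_mem (by exact hx),
      tilted_prod, hforce x hx]
  · rw [Set.indicator_of_notMem (by exact hx), Set.indicator_of_notMem (by exact hx),
      mul_zero]

/-- change of measure against a lintegral of the exponential of the endpoint -/
lemma tilt_lintegral (hmeas : ∀ n, Measurable (ξ n))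
    (hiid : ProbabilityTheory.iIndepFun ξ μ)
    (hlaw : ∀ n, μ.map (ξ n) = ν)
    (hmeasβ : ∀ n, Measurable (ξβ n))
    (hiidβ : ProbabilityTheory.iIndepFun ξβ μβ)
    (hlawβ : ∀ n, μβ.map (ξβ n) =
      ν.withDensity fun x => ENNReal.ofReal (Real.exp (β * x)))
    {p : (ℕ → ℤ) → Prop} {n : ℕ} (hdep : DepOn p n) (t : ℕ)
    {f : Ω → ℝ≥0∞}
    (hf : ∀ ω ∈ evt ξ t p, f ω =
      ENNReal.ofReal (Real.exp (β * ((∑ k ∈ Finset.range n, ξ (t + k) ω : ℤ) : ℝ)))) :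
    μβ (evt ξβ t p) = ∫⁻ ω in evt ξ t p, f ω ∂μ := by
  rw [evt_prob hmeasβ hiidβ hlawβ hdep t,
    evt_lintegral hmeas hiid hlaw hdep t
      (g := fun x : Fin n → ℤ =>
        ENNReal.ofReal (Real.exp (β * ((∑ k : Fin n, x k : ℤ) : ℝ))))
      (fun ω hω => by
        rw [hf ω hω]
        rw [show (∑ k ∈ Finset.range n, ξ (t + k) ω) = ∑ k : Fin n, (fun k : Fin n => ξ (t + (k : ℕ)) ω) k from (Fin.sum_univ_eq_sum_range (fun k => ξ (t + k) ω) n).symm])]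
  refine tsum_congr fun x => ?_
  by_cases hx : p (extz x)
  · rw [Set.indicator_of_mem (by exact hx), Set.indicator_of_mem (by exact hx), tilted_prod]
  · rw [Set.indicator_of_notMem (by exact hx), Set.indicator_of_notMem (by exact hx)]

end Tilt


section Walk

def pl (l n : ℕ) : (ℕ → ℤ) → Prop := fun y =>
  (∑ k ∈ Finset.range n, y k) = -(l : ℤ) ∧
    ∀ m < n, (∑ k ∈ Finset.range n, y k) < ∑ k ∈ Finset.range m, y k

def qs (M : ℕ) : (ℕ → ℤ) → Prop := fun y => ∀ m ≤ M, 0 ≤ ∑ k ∈ Finset.range m, y k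

def pd (n : ℕ) : (ℕ → ℤ) → Prop := fun y =>
  (∑ k ∈ Finset.range n, y k) < 0 ∧
    ∀ m, 1 ≤ m → m < n → 0 ≤ ∑ k ∈ Finset.range m, y k

lemma sum_range_congr {y z : ℕ → ℤ} {n m : ℕ} (h : ∀ k < n, y k = z k) (hm : m ≤ n) :
    ∑ k ∈ Finset.range m, y k = ∑ k ∈ Finset.range m, z k :=
  Finset.sum_congr rfl fun k hk => h k (by have := Finset.mem_range.mp hk; omega)

lemma depOn_pl (l n : ℕ) : DepOn (pl l n) n := by
  intro y z h
  unfold pl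
  rw [sum_range_congr h le_rfl]
  constructor <;> rintro ⟨h1, h2⟩ <;> refine ⟨h1, fun m hm => ?_⟩
  · rw [← sum_range_congr h hm.le]; exact h2 m hm
  · rw [sum_range_congr h hm.le]; exact h2 m hm

lemma depOn_qs (M : ℕ) : DepOn (qs M) M := by
  intro y z h
  unfold qs
  constructor <;> intro h1 m hm
  · rw [← sum_range_congr h hm]; exact h1 m hm
  · rw [sum_range_congr h hm]; exact h1 m hm

lemma depOn_pd (n : ℕ) : DepOn (pd n) n := by
  intro y z h
  unfold pd
  rw [sum_range_congr h le_rfl]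
  constructor <;> rintro ⟨h1, h2⟩ <;> refine ⟨h1, fun m hm1 hm2 => ?_⟩
  · rw [← sum_range_congr h hm2.le]; exact h2 m hm1 hm2
  · rw [sum_range_congr h hm2.le]; exact h2 m hm1 hm2

lemma qs_mono (M : ℕ) (y : ℕ → ℤ) (h : qs (M + 1) y) : qs M y :=
  fun m hm => h m (by omega)

lemma force_pl (l n : ℕ) (x : Fin n → ℤ) (h : pl l n (extz x)) :
    (∑ k : Fin n, x k) = -(l : ℤ) := by
  rw [show (∑ k : Fin n, x k) = ∑ k : Fin n, extz x (k : ℕ) from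
    Finset.sum_congr rfl fun k _ => by rw [extz_lt x k.isLt],
    Fin.sum_univ_eq_sum_range (extz x) n]
  exact h.1

variable {Ω : Type*} [MeasurableSpace Ω] {ξ : ℕ → Ω → ℤ}
  {S : ℕ → Ω → ℤ} (hS : ∀ n ω, S n ω = ∑ k ∈ Finset.range n, ξ k ω)
include hS

lemma Ssplit (n m : ℕ) (ω : Ω) :
    S (n + m) ω = S n ω + ∑ k ∈ Finset.range m, ξ (n + k) ω := by
  rw [hS, hS, Finset.sum_range_add]

lemma set_min (l : ℕ) :
    {ω | (∀ n, -(l : ℤ) ≤ S n ω) ∧ ∃ n, S n ω = -(l : ℤ)} =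
      ⋃ n, (evt ξ 0 (pl l n) ∩ ⋂ M, evt ξ (0 + n) (qs M)) := by
  have hsum : ∀ (m : ℕ) (ω : Ω), ∑ k ∈ Finset.range m, ξ k ω = S m ω :=
    fun m ω => (hS m ω).symm
  ext ω
  simp only [Set.mem_setOf_eq, Set.mem_iUnion, Set.mem_inter_iff, Set.mem_iInter, evt,
    zero_add, pl, qs]
  constructor
  · rintro ⟨hge, hex⟩
    refine ⟨Nat.find hex, ⟨?_, fun m hm => ?_⟩, fun M m _ => ?_⟩
    · rw [hsum]; exact Nat.find_spec hex
    · rw [hsum, hsum]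
      have h1 := hge m
      have h2 : ¬ (S m ω = -(l : ℤ)) := Nat.find_min hex hm
      have h3 := Nat.find_spec hex
      omega
    · have h1 := Ssplit hS (Nat.find hex) m ω
      have h2 := hge (Nat.find hex + m)
      have h3 := Nat.find_spec hex
      omega
  · rintro ⟨n, ⟨h1, h2⟩, h3⟩
    rw [hsum] at h1
    constructor
    · intro m
      rcases lt_or_ge m n with hlt | hge
      · have := h2 m hlt
        rw [hsum, hsum] at this
        omega
      · obtain ⟨m', rfl⟩ : ∃ m', m = n + m' := ⟨m - n, by omega⟩
        have hq := h3 m' m' le_rfl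
        have := Ssplit hS n m' ω
        omega
    · exact ⟨n, h1⟩

lemma set_min_disj (l : ℕ) :
    Pairwise (Function.onFun Disjoint
      (fun n => evt ξ 0 (pl l n) ∩ ⋂ M, evt ξ (0 + n) (qs M))) := by
  have hsum : ∀ (m : ℕ) (ω : Ω), ∑ k ∈ Finset.range m, ξ k ω = S m ω :=
    fun m ω => (hS m ω).symm
  have key : ∀ n n', n < n' → ∀ ω : Ω,
      ω ∈ evt ξ 0 (pl l n) ∩ ⋂ M, evt ξ (0 + n) (qs M) →
      ω ∉ evt ξ 0 (pl l n') ∩ ⋂ M, evt ξ (0 + n') (qs M) := by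
    intro n n' hlt ω hω hω'
    simp only [Set.mem_inter_iff, Set.mem_iInter, evt, zero_add, pl, qs,
      Set.mem_setOf_eq] at hω hω'
    obtain ⟨⟨h1, _⟩, h3⟩ := hω
    obtain ⟨⟨h1', h2'⟩, _⟩ := hω'
    rw [hsum] at h1 h1'
    have h4 := h2' n hlt
    rw [hsum, hsum] at h4
    obtain ⟨m', hm'⟩ : ∃ m', n' = n + m' := ⟨n' - n, by omega⟩
    have h5 := h3 m' m' le_rfl
    have h6 := Ssplit hS n m' ω
    rw [← hm'] at h6
    omega
  intro a b hab
  rcases lt_or_gt_of_ne hab with h | h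
  · exact Set.disjoint_left.mpr fun ω hω hω' => key a b h ω hω hω'
  · exact Set.disjoint_right.mpr fun ω hω hω' => key b a h ω hω hω'

lemma set_desc :
    {ω | ∃ n : ℕ, 1 ≤ n ∧ S n ω < 0} = ⋃ n, evt ξ 0 (pd (n + 1)) := by
  have hsum : ∀ (m : ℕ) (ω : Ω), ∑ k ∈ Finset.range m, ξ k ω = S m ω :=
    fun m ω => (hS m ω).symm
  ext ω
  simp only [Set.mem_setOf_eq, Set.mem_iUnion, evt, zero_add, pd]
  constructor
  · intro hex
    have hn := Nat.find_spec hex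
    obtain ⟨j, hj⟩ : ∃ j, Nat.find hex = j + 1 := ⟨Nat.find hex - 1, by omega⟩
    refine ⟨j, ?_, fun m hm1 hm2 => ?_⟩
    · rw [hsum, ← hj]; exact hn.2
    · rw [hsum]
      have := Nat.find_min hex (m := m) (by omega)
      omega
  · rintro ⟨n, h1, _⟩
    rw [hsum] at h1
    exact ⟨n + 1, by omega, h1⟩

lemma set_desc_disj :
    Pairwise (Function.onFun Disjoint (fun n => evt ξ 0 (pd (n + 1) : (ℕ → ℤ) → Prop))) := by
  have hsum : ∀ (m : ℕ) (ω : Ω), ∑ k ∈ Finset.range m, ξ k ω = S m ω :=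
    fun m ω => (hS m ω).symm
  have key : ∀ n n', n < n' → ∀ ω : Ω,
      ω ∈ evt ξ 0 (pd (n + 1)) → ω ∉ evt ξ 0 (pd (n' + 1)) := by
    intro n n' hlt ω hω hω'
    simp only [evt, zero_add, pd, Set.mem_setOf_eq] at hω hω'
    have h1 := hω.1
    have h2 := hω'.2 (n + 1) (by omega) (by omega)
    omega
  intro a b hab
  rcases lt_or_gt_of_ne hab with h | h
  · exact Set.disjoint_left.mpr fun ω hω hω' => key a b h ω hω hω'
  · exact Set.disjoint_right.mpr fun ω hω hω' => key b a h ω hω hω'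

lemma set_stay :
    (⋂ M, evt ξ 0 (qs M)) = {ω | ∀ n, 1 ≤ n → 0 ≤ S n ω} := by
  have hsum : ∀ (m : ℕ) (ω : Ω), ∑ k ∈ Finset.range m, ξ k ω = S m ω :=
    fun m ω => (hS m ω).symm
  ext ω
  simp only [Set.mem_iInter, evt, zero_add, qs, Set.mem_setOf_eq]
  constructor
  · intro h n _
    rw [← hsum]
    exact h n n le_rfl
  · intro h M m _
    rcases Nat.eq_zero_or_pos m with rfl | hm
    · simp
    · rw [hsum]; exact h m hm

lemma set_desc_compl :
    {ω | ∃ n : ℕ, 1 ≤ n ∧ S n ω < 0}ᶜ = {ω | ∀ n, 1 ≤ n → 0 ≤ S n ω} := by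
  ext ω
  simp only [Set.mem_compl_iff, Set.mem_setOf_eq, not_exists, not_and, not_lt]

end Walk


section Main

variable {Ω Ω' : Type*} [MeasurableSpace Ω] [MeasurableSpace Ω']
    {μ : Measure Ω} [IsProbabilityMeasure μ] {μβ : Measure Ω'} [IsProbabilityMeasure μβ]
    {ν : Measure ℤ} {β : ℝ}
    {ξ : ℕ → Ω → ℤ} (hmeas : ∀ n, Measurable (ξ n))
    (hiid : ProbabilityTheory.iIndepFun ξ μ)
    (hlaw : ∀ n, μ.map (ξ n) = ν)
    {ξβ : ℕ → Ω' → ℤ} (hmeasβ : ∀ n, Measurable (ξβ n))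
    (hiidβ : ProbabilityTheory.iIndepFun ξβ μβ)
    (hlawβ : ∀ n, μβ.map (ξβ n) =
      ν.withDensity fun x => ENNReal.ofReal (Real.exp (β * x)))
    {S : ℕ → Ω → ℤ} (hS : ∀ n ω, S n ω = ∑ k ∈ Finset.range n, ξ k ω)
    {Sβ : ℕ → Ω' → ℤ} (hSβ : ∀ n ω, Sβ n ω = ∑ k ∈ Finset.range n, ξβ k ω)
include hmeas hiid hlaw hmeasβ hiidβ hlawβ hS hSβ

lemma set_ladder (l n : ℕ) :
    {ω | S n ω = -(l : ℤ) ∧ ∀ m < n, S n ω < S m ω} = evt ξ 0 (pl l n) := by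
  ext ω
  simp only [Set.mem_setOf_eq, evt, zero_add, pl, ← hS]

lemma min_prob (u : ℕ → ℝ≥0∞)
    (hu : ∀ l : ℕ, u l =
      ∑' n : ℕ, μ {ω | S n ω = -(l : ℤ) ∧ ∀ m < n, S n ω < S m ω}) (l : ℕ) :
    μβ {ω | (∀ n, -(l : ℤ) ≤ Sβ n ω) ∧ ∃ n, Sβ n ω = -(l : ℤ)} =
      μβ {ω | ∀ n, 1 ≤ n → 0 ≤ Sβ n ω} * ENNReal.ofReal (Real.exp (-(β * l))) * u l := by
  have hmeasP : ∀ n : ℕ, MeasurableSet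
      (evt ξβ 0 (pl l n) ∩ ⋂ M, evt ξβ (0 + n) (qs M)) := fun n =>
    (evt_measurable hmeasβ (depOn_pl l n) 0).inter
      (MeasurableSet.iInter fun M => evt_measurable hmeasβ (depOn_qs M) (0 + n))
  rw [set_min hSβ l, measure_iUnion (set_min_disj hSβ l) hmeasP]
  have hterm : ∀ n : ℕ,
      μβ (evt ξβ 0 (pl l n) ∩ ⋂ M, evt ξβ (0 + n) (qs M)) =
        ENNReal.ofReal (Real.exp (-(β * l))) *
          μ (evt ξ 0 (pl l n)) * μβ (⋂ M, evt ξβ 0 (qs M)) := by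
    intro n
    rw [evt_prob_mul_iInter hmeasβ hiidβ hlawβ (depOn_pl l n) depOn_qs qs_mono 0,
      tilt_prob hmeas hiid hlaw hmeasβ hiidβ hlawβ (depOn_pl l n) (force_pl l n) 0]
    congr 2
    push_cast
    ring_nf
  rw [tsum_congr hterm, ENNReal.tsum_mul_right, ENNReal.tsum_mul_left,
    set_stay hSβ, hu l]
  rw [tsum_congr fun n => congrArg μ (set_ladder hmeas hiid hlaw hmeasβ hiidβ hlawβ hS hSβ l n)]
  ring

lemma echi_eq (Echi : ℝ≥0∞)
    (hEchi : Echi = ∫⁻ ω in {ω | ∃ n : ℕ, 1 ≤ n ∧ S n ω < 0},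
      ENNReal.ofReal (Real.exp (β * (S (sInf {n : ℕ | 1 ≤ n ∧ S n ω < 0}) ω))) ∂μ) :
    Echi = μβ {ω | ∃ n : ℕ, 1 ≤ n ∧ Sβ n ω < 0} := by
  rw [hEchi, set_desc hS,
    lintegral_iUnion (fun n => evt_measurable hmeas (depOn_pd (n + 1)) 0) (set_desc_disj hS)]
  have hterm : ∀ n : ℕ,
      ∫⁻ ω in evt ξ 0 (pd (n + 1)),
        ENNReal.ofReal (Real.exp (β * (S (sInf {m : ℕ | 1 ≤ m ∧ S m ω < 0}) ω))) ∂μ =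
      μβ (evt ξβ 0 (pd (n + 1))) := by
    intro n
    refine (tilt_lintegral hmeas hiid hlaw hmeasβ hiidβ hlawβ (depOn_pd (n + 1)) 0
      (fun ω hω => ?_)).symm
    have hω' : pd (n + 1) (fun k => ξ (0 + k) ω) := hω
    simp only [pd, zero_add] at hω'
    have hT : sInf {m : ℕ | 1 ≤ m ∧ S m ω < 0} = n + 1 := by
      apply le_antisymm
      · exact Nat.sInf_le ⟨by omega, by rw [hS]; exact hω'.1⟩
      · refine le_csInf ⟨n + 1, by omega, by rw [hS]; exact hω'.1⟩ fun m hm => ?_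
        by_contra hc
        push_neg at hc
        have h2 := hm.2
        have h3 := hω'.2 m hm.1 (by omega)
        rw [hS] at h2
        omega
    rw [hT, hS]
    congr 3
    exact congrArg (fun z : ℤ => (z : ℝ))
      (Finset.sum_congr rfl fun k _ => by rw [zero_add])
  rw [tsum_congr hterm,
    ← measure_iUnion (set_desc_disj hSβ) (fun n => evt_measurable hmeasβ (depOn_pd (n + 1)) 0),
    ← set_desc hSβ]


omit hmeas hiid hlaw hmeasβ hiidβ hlawβ hS in
lemma set_stay_decomp (i : ℕ) :
    {ω | ∀ n, -(i : ℤ) ≤ Sβ n ω} = ⋃ l ∈ Finset.range (i + 1),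
      {ω | (∀ n, -(l : ℤ) ≤ Sβ n ω) ∧ ∃ n, Sβ n ω = -(l : ℤ)} := by
  classical
  have hS0 : ∀ ω, Sβ 0 ω = 0 := fun ω => by rw [hSβ]; simp
  ext ω
  simp only [Set.mem_setOf_eq, Set.mem_iUnion, Finset.mem_range]
  constructor
  · intro h
    have hex : ∃ d : ℕ, ∃ n, Sβ n ω = -(i : ℤ) + d := ⟨i, 0, by rw [hS0]; ring⟩
    obtain ⟨n₀, hn₀⟩ := Nat.find_spec hex
    have hd₀i : Nat.find hex ≤ i := Nat.find_min' hex ⟨0, by rw [hS0]; ring⟩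
    refine ⟨i - Nat.find hex, by omega, fun n => ?_, ⟨n₀, by omega⟩⟩
    have hn := h n
    have hdn : Sβ n ω = -(i : ℤ) + (Sβ n ω + i).toNat := by omega
    have hge := Nat.find_min' hex ⟨n, hdn⟩
    omega
  · rintro ⟨l, hl, h1, _⟩ n
    have := h1 n
    omega

omit hmeas hiid hlaw hmeasβ hiidβ hlawβ hS hSβ in
lemma set_min_pairwise_disj (i : ℕ) :
    (↑(Finset.range (i + 1)) : Set ℕ).Pairwise (Function.onFun Disjoint
      (fun l => {ω | (∀ n, -(l : ℤ) ≤ Sβ n ω) ∧ ∃ n, Sβ n ω = -(l : ℤ)})) := by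
  have key : ∀ a b : ℕ, a < b → ∀ ω : Ω',
      ω ∈ {ω | (∀ n, -(a : ℤ) ≤ Sβ n ω) ∧ ∃ n, Sβ n ω = -(a : ℤ)} →
      ω ∉ {ω | (∀ n, -(b : ℤ) ≤ Sβ n ω) ∧ ∃ n, Sβ n ω = -(b : ℤ)} := by
    rintro a b hab ω ⟨h1, -⟩ ⟨-, n, hn⟩
    have := h1 n
    omega
  intro a _ b _ hab
  rcases lt_or_gt_of_ne hab with h | h
  · exact Set.disjoint_left.mpr fun ω hω hω' => key a b h ω hω hω'
  · exact Set.disjoint_right.mpr fun ω hω hω' => key b a h ω hω hω'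

end Main

theorem stmt15' {Ω Ω' : Type*} [MeasurableSpace Ω] [MeasurableSpace Ω']
    (μ : Measure Ω) [IsProbabilityMeasure μ] (μβ : Measure Ω') [IsProbabilityMeasure μβ]
    (ν : Measure ℤ) [IsProbabilityMeasure ν]
    (β : ℝ)
    (ξ : ℕ → Ω → ℤ) (hmeas : ∀ n, Measurable (ξ n))
    (hiid : ProbabilityTheory.iIndepFun ξ μ)
    (hlaw : ∀ n, μ.map (ξ n) = ν)
    (ξβ : ℕ → Ω' → ℤ) (hmeasβ : ∀ n, Measurable (ξβ n))
    (hiidβ : ProbabilityTheory.iIndepFun ξβ μβ)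
    (hlawβ : ∀ n, μβ.map (ξβ n) =
      ν.withDensity fun x => ENNReal.ofReal (Real.exp (β * x)))
    (S : ℕ → Ω → ℤ) (hS : ∀ n ω, S n ω = ∑ k ∈ Finset.range n, ξ k ω)
    (Sβ : ℕ → Ω' → ℤ) (hSβ : ∀ n ω, Sβ n ω = ∑ k ∈ Finset.range n, ξβ k ω)
    (u : ℕ → ℝ≥0∞)
    (hu : ∀ l : ℕ, u l =
      ∑' n : ℕ, μ {ω | S n ω = -(l : ℤ) ∧ ∀ m < n, S n ω < S m ω})
    (Echi : ℝ≥0∞)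
    (hEchi : Echi = ∫⁻ ω in {ω | ∃ n : ℕ, 1 ≤ n ∧ S n ω < 0},
      ENNReal.ofReal (Real.exp (β * (S (sInf {n : ℕ | 1 ≤ n ∧ S n ω < 0}) ω))) ∂μ) :
    (∀ l : ℕ,
      μβ {ω | (∀ n, -(l : ℤ) ≤ Sβ n ω) ∧ ∃ n, Sβ n ω = -(l : ℤ)} =
        μβ {ω | ∀ n, 1 ≤ n → 0 ≤ Sβ n ω} * ENNReal.ofReal (Real.exp (-(β * l))) * u l) ∧
    ∀ i : ℕ,
      ENNReal.ofReal (Real.exp (β * i)) * μβ {ω | ∀ n, -(i : ℤ) ≤ Sβ n ω} =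
        (1 - Echi) * ∑ j ∈ Finset.range (i + 1),
          ENNReal.ofReal (Real.exp (β * ((i : ℝ) - (j : ℝ)))) * u j := by
  have part1 := min_prob hmeas hiid hlaw hmeasβ hiidβ hlawβ hS hSβ u hu
  refine ⟨part1, fun i => ?_⟩
  have hB : μβ {ω | ∀ n, 1 ≤ n → 0 ≤ Sβ n ω} = 1 - Echi := by
    rw [echi_eq hmeas hiid hlaw hmeasβ hiidβ hlawβ hS hSβ Echi hEchi]
    rw [← set_desc_compl hSβ, prob_compl_eq_one_sub]
    rw [set_desc hSβ]
    exact MeasurableSet.iUnion fun n => evt_measurable hmeasβ (depOn_pd (n + 1)) 0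
  have hGmeas : ∀ l : ℕ, MeasurableSet
      {ω | (∀ n, -(l : ℤ) ≤ Sβ n ω) ∧ ∃ n, Sβ n ω = -(l : ℤ)} := by
    intro l
    rw [set_min hSβ l]
    exact MeasurableSet.iUnion fun n =>
      (evt_measurable hmeasβ (depOn_pl l n) 0).inter
        (MeasurableSet.iInter fun M => evt_measurable hmeasβ (depOn_qs M) (0 + n))
  rw [set_stay_decomp hSβ i,
    measure_biUnion_finset (set_min_pairwise_disj i) (fun l _ => hGmeas l),
    Finset.mul_sum, Finset.mul_sum]
  refine Finset.sum_congr rfl fun l hl => ?_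
  rw [part1 l, hB]
  rw [show ENNReal.ofReal (Real.exp (β * ((i : ℝ) - (l : ℝ)))) =
      ENNReal.ofReal (Real.exp (β * i)) * ENNReal.ofReal (Real.exp (-(β * l))) by
    rw [← ENNReal.ofReal_mul (Real.exp_nonneg _), ← Real.exp_add]
    ring_nf]
  ring

end Stmt15Aux


theorem stmt15 {Ω Ω' : Type*} [MeasurableSpace Ω] [MeasurableSpace Ω']
    (μ : Measure Ω) [IsProbabilityMeasure μ] (μβ : Measure Ω') [IsProbabilityMeasure μβ]
    (ν : Measure ℤ) [IsProbabilityMeasure ν]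
    (hint : Integrable (fun x : ℤ => (x : ℝ)) ν) (hneg : ∫ x, (x : ℝ) ∂ν < 0)
    (β : ℝ) (hβ : 0 < β)
    (hcram : ∫⁻ x, ENNReal.ofReal (Real.exp (β * x)) ∂ν = 1)
    (ξ : ℕ → Ω → ℤ) (hmeas : ∀ n, Measurable (ξ n))
    (hiid : ProbabilityTheory.iIndepFun ξ μ)
    (hlaw : ∀ n, μ.map (ξ n) = ν)
    (ξβ : ℕ → Ω' → ℤ) (hmeasβ : ∀ n, Measurable (ξβ n))
    (hiidβ : ProbabilityTheory.iIndepFun ξβ μβ)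
    (hlawβ : ∀ n, μβ.map (ξβ n) =
      ν.withDensity fun x => ENNReal.ofReal (Real.exp (β * x)))
    (S : ℕ → Ω → ℤ) (hS : ∀ n ω, S n ω = ∑ k ∈ Finset.range n, ξ k ω)
    (Sβ : ℕ → Ω' → ℤ) (hSβ : ∀ n ω, Sβ n ω = ∑ k ∈ Finset.range n, ξβ k ω)
    (u : ℕ → ℝ≥0∞)
    (hu : ∀ l : ℕ, u l =
      ∑' n : ℕ, μ {ω | S n ω = -(l : ℤ) ∧ ∀ m < n, S n ω < S m ω})
    (Echi : ℝ≥0∞)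
    (hEchi : Echi = ∫⁻ ω in {ω | ∃ n : ℕ, 1 ≤ n ∧ S n ω < 0},
      ENNReal.ofReal (Real.exp (β * (S (sInf {n : ℕ | 1 ≤ n ∧ S n ω < 0}) ω))) ∂μ) :
    (∀ l : ℕ,
      μβ {ω | (∀ n, -(l : ℤ) ≤ Sβ n ω) ∧ ∃ n, Sβ n ω = -(l : ℤ)} =
        μβ {ω | ∀ n, 1 ≤ n → 0 ≤ Sβ n ω} * ENNReal.ofReal (Real.exp (-(β * l))) * u l) ∧
    ∀ i : ℕ,
      ENNReal.ofReal (Real.exp (β * i)) * μβ {ω | ∀ n, -(i : ℤ) ≤ Sβ n ω} =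
        (1 - Echi) * ∑ j ∈ Finset.range (i + 1),
          ENNReal.ofReal (Real.exp (β * ((i : ℝ) - (j : ℝ)))) * u j := by
  exact Stmt15Aux.stmt15' μ μβ ν β ξ hmeas hiid hlaw ξβ hmeasβ hiidβ hlawβ S hS Sβ hSβ u hu Echi hEchi
end
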